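/- arXiv:2311.02721 — 4 statements merged into one kernel-verified Lean document; each statement's English description precedes it below -/
import Mathlib

section
/- Let b, m, n, r ∈ ℕ with m ≥ 1, r ≥ 1, n ≥ r + b and n ≥ 2b. Then |T(m,n,b)_r| = |T(m,n,b)_{r−1}| + |MP^m_b(r)|. -/
open scoped BigOperators

/-- The set of semistandard Young tableaux of the two-row shape `(n-k, k)` with entries in
`{0, 1, …, m}` whose entries sum to `r`: a tableau is recorded as the pair of its two rows,
weakly increasing along rows and strictly increasing down the (first `k`) columns. -/
def TwoRowSSYT (m n k r : ℕ) : Set ((Fin (n - k) → ℕ) × (Fin k → ℕ)) :=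
  {t | Monotone t.1 ∧ Monotone t.2 ∧
    (∀ (j : ℕ) (hk : j < k) (hnk : j < n - k), t.1 ⟨j, hnk⟩ < t.2 ⟨j, hk⟩) ∧
    (∀ i, t.1 i ≤ m) ∧ (∀ j, t.2 j ≤ m) ∧
    ((∑ i, t.1 i) + (∑ j, t.2 j) = r)}

/-- `PPset b m r` is the set of pairs `(γ, π)` of partitions (recorded as multisets of positive
natural numbers) such that `γ` has exactly `b` parts, all parts of `γ` and `π` are at most `m`,
and `|γ| + |π| = r`. -/
def PPset (b m r : ℕ) : Set (Multiset ℕ × Multiset ℕ) :=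
  {p | (∀ x ∈ p.1, 0 < x) ∧ (∀ x ∈ p.2, 0 < x) ∧
    Multiset.card p.1 = b ∧ (∀ x ∈ p.1, x ≤ m) ∧ (∀ x ∈ p.2, x ≤ m) ∧
    p.1.sum + p.2.sum = r}

/-- `MPset b r` is the set of `b`-marked partitions of `r`: pairs `(γ, ε)` of partitions
(multisets of positive natural numbers) with `γ` having exactly `b` parts, `ε` having no parts
equal to `1`, and `|γ| + |ε| = r`. -/
def MPset (b r : ℕ) : Set (Multiset ℕ × Multiset ℕ) :=
  {p | (∀ x ∈ p.1, 0 < x) ∧ (∀ x ∈ p.2, 0 < x) ∧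
    Multiset.card p.1 = b ∧ (∀ x ∈ p.2, x ≠ 1) ∧
    p.1.sum + p.2.sum = r}

/-- `MPmset M b r` is the subset of `MPset b r` of those `(γ, ε)` all of whose parts are
at most `M`. -/
def MPmset (M b r : ℕ) : Set (Multiset ℕ × Multiset ℕ) :=
  {p | p ∈ MPset b r ∧ (∀ x ∈ p.1, x ≤ M) ∧ (∀ x ∈ p.2, x ≤ M)}

open Multiset in
/-- value multiset of a tuple -/
def mvalX {k : ℕ} (f : Fin k → ℕ) : Multiset ℕ := Finset.univ.val.map f

lemma mvalX_coe {k : ℕ} (f : Fin k → ℕ) : mvalX f = ↑(List.ofFn f) := Fin.univ_val_map f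

lemma card_mvalX {k : ℕ} (f : Fin k → ℕ) : Multiset.card (mvalX f) = k := by
  simp [mvalX_coe]

lemma sum_mvalX {k : ℕ} (f : Fin k → ℕ) : (mvalX f).sum = ∑ i, f i := rfl

lemma mem_mvalX {k : ℕ} (f : Fin k → ℕ) (i : Fin k) : f i ∈ mvalX f :=
  Multiset.mem_map_of_mem f (Finset.mem_univ i)

lemma mvalX_mono_inj {k : ℕ} {f g : Fin k → ℕ} (hf : Monotone f) (hg : Monotone g)
    (h : mvalX f = mvalX g) : f = g := by
  rw [mvalX_coe, mvalX_coe, Multiset.coe_eq_coe] at h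
  exact List.ofFn_inj.mp (h.eq_of_sortedLE hf.sortedLE_ofFn hg.sortedLE_ofFn)

def funOfX (k : ℕ) (s : Multiset ℕ) (h : (s.sort (· ≤ ·)).length = k) : Fin k → ℕ :=
  fun i => (s.sort (· ≤ ·)).get (Fin.cast h.symm i)

lemma ofFn_funOfX (k : ℕ) (s : Multiset ℕ) (h : (s.sort (· ≤ ·)).length = k) :
    List.ofFn (funOfX k s h) = s.sort (· ≤ ·) := by
  subst h; exact List.ofFn_get _

lemma mvalX_funOfX (k : ℕ) (s : Multiset ℕ) (h : (s.sort (· ≤ ·)).length = k) :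
    mvalX (funOfX k s h) = s := by
  rw [mvalX_coe, ofFn_funOfX, Multiset.sort_eq]

lemma monotone_funOfX (k : ℕ) (s : Multiset ℕ) (h : (s.sort (· ≤ ·)).length = k) :
    Monotone (funOfX k s h) :=
  List.sortedLE_ofFn_iff.mp (by rw [ofFn_funOfX, List.sortedLE_iff_pairwise]; exact Multiset.pairwise_sort _ _)

lemma mcard_le_msum (s : Multiset ℕ) (h : ∀ x ∈ s, 0 < x) : Multiset.card s ≤ s.sum := by
  induction s using Multiset.induction with
  | empty => simp
  | cons a s ih =>
    simp only [Multiset.card_cons, Multiset.sum_cons]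
    have h1 := h a (Multiset.mem_cons_self a s)
    have h2 := ih (fun x hx => h x (Multiset.mem_cons_of_mem hx))
    omega

lemma mdecomp (s : Multiset ℕ) :
    s = s.filter (fun x => 0 < x)
      + Multiset.replicate (Multiset.card s - Multiset.card (s.filter (fun x => 0 < x))) 0 := by
  have hcard := congrArg Multiset.card (Multiset.filter_add_not (fun x => 0 < x) s)
  rw [Multiset.card_add] at hcard
  conv_lhs => rw [← Multiset.filter_add_not (fun x => 0 < x) s]
  congr 1
  have h0 : ∀ x ∈ s.filter (fun x => ¬ 0 < x), x = 0 := by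
    intro x hx
    have := (Multiset.mem_filter.mp hx).2
    omega
  rw [Multiset.eq_replicate_card.mpr h0]
  congr 1
  omega

/-- key: a monotone tuple whose value multiset has `z` zeros is `0` below index `z`. -/
lemma monotone_zero_prefix {N z : ℕ} {f : Fin N → ℕ} (hf : Monotone f) {π : Multiset ℕ}
    (hpos : ∀ x ∈ π, 0 < x) (hmv : mvalX f = π + Multiset.replicate z 0)
    (j : Fin N) (hj : (j : ℕ) < z) : f j = 0 := by
  by_contra hne
  have hj1 : 0 < f j := Nat.pos_of_ne_zero hne
  have hsub : Finset.Ici j ⊆ Finset.univ.filter (fun i => 0 < f i) := by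
    intro i hi
    simp only [Finset.mem_filter, Finset.mem_univ, true_and]
    exact lt_of_lt_of_le hj1 (hf (Finset.mem_Ici.mp hi))
  have hcard1 : N - (j : ℕ) ≤ (Finset.univ.filter (fun i => 0 < f i)).card := by
    have := Finset.card_le_card hsub
    rwa [Fin.card_Ici] at this
  have hcount : Multiset.countP (fun x => 0 < x) (mvalX f)
      = (Finset.univ.filter (fun i => 0 < f i)).card := by
    rw [mvalX, Multiset.countP_map]
    rfl
  have hcount2 : Multiset.countP (fun x => 0 < x) (mvalX f) = Multiset.card π := by
    have h0 : Multiset.countP (fun x => 0 < x) (Multiset.replicate z 0) = 0 :=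
      Multiset.countP_eq_zero.mpr (fun x hx => by rw [Multiset.eq_of_mem_replicate hx]; omega)
    rw [hmv, Multiset.countP_add, Multiset.countP_eq_card.mpr hpos, h0]
    omega
  have hN : N = Multiset.card π + z := by
    have := congrArg Multiset.card hmv
    rw [card_mvalX, Multiset.card_add, Multiset.card_replicate] at this
    exact this
  omega



lemma twoRow_ncard_eq (b m n r : ℕ) (h2 : r + b ≤ n) (h3 : 2 * b ≤ n) :
    (TwoRowSSYT m n b r).ncard = (PPset b m r).ncard := by
  set Φ : ((Fin (n - b) → ℕ) × (Fin b → ℕ)) → Multiset ℕ × Multiset ℕ :=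
    fun t => (mvalX t.2, (mvalX t.1).filter (fun x => 0 < x)) with hΦ
  have himg : Φ '' (TwoRowSSYT m n b r) = PPset b m r := by
    apply Set.Subset.antisymm
    · rintro _ ⟨t, ⟨hm1, hm2, hcol, hb1, hb2, hsum⟩, rfl⟩
      show (mvalX t.2, (mvalX t.1).filter (fun x => 0 < x)) ∈ PPset b m r
      have hpos2 : ∀ x ∈ mvalX t.2, 0 < x := by
        intro x hx
        obtain ⟨j, _, rfl⟩ := Multiset.mem_map.mp hx
        have hjnb : (j : ℕ) < n - b := lt_of_lt_of_le j.isLt (by omega)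
        have := hcol j j.isLt hjnb
        simp only [Fin.eta] at this
        omega
      have hsfilter : ((mvalX t.1).filter (fun x => 0 < x)).sum = (mvalX t.1).sum := by
        conv_rhs => rw [mdecomp (mvalX t.1)]
        simp [Multiset.sum_replicate]
      refine ⟨hpos2, ?_, card_mvalX _, ?_, ?_, ?_⟩
      · intro x hx
        have hx' : x ∈ (mvalX t.1).filter (fun x => 0 < x) := hx
        exact (Multiset.mem_filter.mp hx').2
      · intro x hx
        have hx' : x ∈ mvalX t.2 := hx
        obtain ⟨j, _, rfl⟩ := Multiset.mem_map.mp hx'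
        exact hb2 j
      · intro x hx
        have hx' : x ∈ (mvalX t.1).filter (fun x => 0 < x) := hx
        obtain ⟨j, _, rfl⟩ := Multiset.mem_map.mp (Multiset.mem_of_mem_filter hx')
        exact hb1 j
      · show (mvalX t.2).sum + ((mvalX t.1).filter (fun x => 0 < x)).sum = r
        rw [hsfilter, sum_mvalX, sum_mvalX]
        omega
    · rintro ⟨γ, π⟩ ⟨hγpos, hπpos, hγcard, hγm, hπm, hsum⟩
      have hγcard' : Multiset.card γ = b := hγcard
      have hsum' : γ.sum + π.sum = r := hsum
      have hγpos' : ∀ x ∈ γ, 0 < x := hγpos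
      have hπpos' : ∀ x ∈ π, 0 < x := hπpos
      have hγb : b ≤ γ.sum := hγcard' ▸ mcard_le_msum γ hγpos'
      have hπcard : Multiset.card π ≤ π.sum := mcard_le_msum π hπpos'
      set z : ℕ := (n - b) - Multiset.card π with hz
      have hslen : ((π + Multiset.replicate z 0).sort (· ≤ ·)).length = n - b := by
        rw [Multiset.length_sort, Multiset.card_add, Multiset.card_replicate]
        omega
      have hγlen : (γ.sort (· ≤ ·)).length = b := by
        rw [Multiset.length_sort, hγcard']
      set f := funOfX (n - b) (π + Multiset.replicate z 0) hslen with hf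
      set g := funOfX b γ hγlen with hg
      have hmvf : mvalX f = π + Multiset.replicate z 0 := mvalX_funOfX _ _ _
      have hmvg : mvalX g = γ := mvalX_funOfX _ _ _
      have hfz : ∀ (j : Fin (n - b)), (j : ℕ) < b → f j = 0 := by
        intro j hj
        exact monotone_zero_prefix (monotone_funOfX (n - b) (π + Multiset.replicate z 0) hslen)
          hπpos' hmvf j (by omega)
      refine ⟨(f, g), ⟨monotone_funOfX (n - b) (π + Multiset.replicate z 0) hslen,
        monotone_funOfX b γ hγlen, ?_, ?_, ?_, ?_⟩, ?_⟩
      · intro j hk hnk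
        show f ⟨j, hnk⟩ < g ⟨j, hk⟩
        have h0 : f ⟨j, hnk⟩ = 0 := hfz ⟨j, hnk⟩ hk
        have hgm : g ⟨j, hk⟩ ∈ γ := hmvg ▸ mem_mvalX g ⟨j, hk⟩
        have := hγpos' _ hgm
        omega
      · intro i
        show f i ≤ m
        have hmem : f i ∈ π + Multiset.replicate z 0 := hmvf ▸ mem_mvalX f i
        rcases Multiset.mem_add.mp hmem with h | h
        · exact hπm _ h
        · rw [Multiset.eq_of_mem_replicate h]; omega
      · intro j
        show g j ≤ m
        exact hγm _ (hmvg ▸ mem_mvalX g j)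
      · show (∑ i, f i) + (∑ j, g j) = r
        have h1 : (∑ i, f i) = (π + Multiset.replicate z 0).sum :=
          (sum_mvalX f) ▸ congrArg Multiset.sum hmvf
        have h2 : (∑ j, g j) = γ.sum := (sum_mvalX g) ▸ congrArg Multiset.sum hmvg
        rw [h1, h2, Multiset.sum_add, Multiset.sum_replicate]
        simp only [smul_zero]
        omega
      · have hfilter : ((mvalX f).filter (fun x => 0 < x)) = π := by
          rw [hmvf, Multiset.filter_add, Multiset.filter_eq_self.mpr hπpos',
            Multiset.filter_eq_nil.mpr (fun x hx => by
              rw [Multiset.eq_of_mem_replicate hx]; omega)]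
          simp
        simp only [hΦ, hmvg, hfilter]
  have hinj : Set.InjOn Φ (TwoRowSSYT m n b r) := by
    rintro ⟨f, g⟩ ⟨hm1, hm2, -, -, -, -⟩ ⟨f', g'⟩ ⟨hm1', hm2', -, -, -, -⟩ heq
    simp only [hΦ, Prod.mk.injEq] at heq
    have hgg : g = g' := mvalX_mono_inj hm2 hm2' heq.1
    have hmv : mvalX f = mvalX f' := by
      conv_lhs => rw [mdecomp (mvalX f)]
      conv_rhs => rw [mdecomp (mvalX f')]
      rw [heq.2, card_mvalX, card_mvalX]
    have hff : f = f' := mvalX_mono_inj hm1 hm1' hmv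
    simp [hff, hgg]
  rw [← himg, Set.ncard_image_of_injOn hinj]



lemma partMset_finite (r : ℕ) : {s : Multiset ℕ | s.sum ≤ r ∧ ∀ x ∈ s, 0 < x}.Finite := by
  have hsub : {s : Multiset ℕ | s.sum ≤ r ∧ ∀ x ∈ s, 0 < x} ⊆
      ⋃ i ∈ Set.Iio (r + 1), Set.range (fun q : Nat.Partition i => q.parts) := by
    rintro s ⟨hsum, hpos⟩
    exact Set.mem_biUnion (show s.sum ∈ Set.Iio (r + 1) from Nat.lt_succ_of_le hsum)
      ⟨⟨s, fun {x} hx => hpos x hx, rfl⟩, rfl⟩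
  exact Set.Finite.subset
    (Set.Finite.biUnion (Set.finite_Iio _) fun i _ => Set.finite_range _) hsub

lemma PPset_finite (b m r : ℕ) : (PPset b m r).Finite := by
  refine Set.Finite.subset ((partMset_finite r).prod (partMset_finite r)) ?_
  rintro ⟨a, c⟩ ⟨hapos, hcpos, -, -, -, hsum⟩
  have hsum' : a.sum + c.sum = r := hsum
  exact ⟨⟨by omega, hapos⟩, ⟨by omega, hcpos⟩⟩

lemma MPm_eq (b m r : ℕ) : MPmset m b r = {p ∈ PPset b m r | (1 : ℕ) ∉ p.2} := by
  ext ⟨γ, ε⟩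
  constructor
  · rintro ⟨⟨h1, h2, h3, h4, h5⟩, h6, h7⟩
    exact ⟨⟨h1, h2, h3, h6, h7, h5⟩, fun hmem => h4 1 hmem rfl⟩
  · rintro ⟨⟨h1, h2, h3, h4, h5, h6⟩, h7⟩
    exact ⟨⟨h1, h2, h3, fun x hx hx1 => h7 (hx1 ▸ hx), h6⟩, h4, h5⟩

lemma PP_split_ncard (b m r : ℕ) (hm : 1 ≤ m) (hr : 1 ≤ r) :
    (PPset b m r).ncard = (PPset b m (r - 1)).ncard + (MPmset m b r).ncard := by
  set S1 : Set (Multiset ℕ × Multiset ℕ) := {p ∈ PPset b m r | (1 : ℕ) ∈ p.2} with hS1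
  have hMPsub : MPmset m b r ⊆ PPset b m r := by
    rw [MPm_eq]; exact Set.sep_subset _ _
  have hunion : PPset b m r = S1 ∪ MPmset m b r := by
    rw [MPm_eq, hS1]
    ext p
    by_cases h : (1 : ℕ) ∈ p.2 <;> simp [h]
  have hdisj : Disjoint S1 (MPmset m b r) := by
    rw [Set.disjoint_left, MPm_eq]
    rintro p ⟨-, h1⟩ ⟨-, h2⟩
    exact h2 h1
  have hfin := PPset_finite b m r
  rw [hunion, Set.ncard_union_eq hdisj (hfin.subset (Set.sep_subset _ _)) (hfin.subset hMPsub)]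
  congr 1
  -- |S1| = |PPset b m (r-1)| via erasing a part equal to 1
  have himg : (fun p : Multiset ℕ × Multiset ℕ => (p.1, p.2.erase 1)) '' S1
      = PPset b m (r - 1) := by
    apply Set.Subset.antisymm
    · rintro _ ⟨⟨γ, ε⟩, ⟨⟨h1, h2, h3, h4, h5, h6⟩, hmem⟩, rfl⟩
      have hmem' : (1 : ℕ) ∈ ε := hmem
      have h6' : γ.sum + ε.sum = r := h6
      have hcons : (1 : ℕ) ::ₘ ε.erase 1 = ε := Multiset.cons_erase hmem'
      have hεsum : ε.sum = 1 + (ε.erase 1).sum := by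
        conv_lhs => rw [← hcons]
        rw [Multiset.sum_cons]
      refine ⟨h1, ?_, h3, h4, ?_, ?_⟩
      · intro x hx
        exact h2 x (Multiset.mem_of_mem_erase hx)
      · intro x hx
        exact h5 x (Multiset.mem_of_mem_erase hx)
      · show γ.sum + (ε.erase 1).sum = r - 1
        omega
    · rintro ⟨γ, ε⟩ ⟨h1, h2, h3, h4, h5, h6⟩
      have h6' : γ.sum + ε.sum = r - 1 := h6
      refine ⟨(γ, (1 : ℕ) ::ₘ ε), ⟨⟨h1, ?_, h3, h4, ?_, ?_⟩, ?_⟩, ?_⟩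
      · intro x hx
        rcases Multiset.mem_cons.mp hx with h | h
        · omega
        · exact h2 x h
      · intro x hx
        rcases Multiset.mem_cons.mp hx with h | h
        · omega
        · exact h5 x h
      · show γ.sum + ((1 : ℕ) ::ₘ ε).sum = r
        rw [Multiset.sum_cons]
        omega
      · exact Multiset.mem_cons_self 1 ε
      · show (γ, ((1 : ℕ) ::ₘ ε).erase 1) = (γ, ε)
        rw [Multiset.erase_cons_head]
  have hinj : Set.InjOn (fun p : Multiset ℕ × Multiset ℕ => (p.1, p.2.erase 1)) S1 := by
    rintro ⟨γ, ε⟩ ⟨-, hmem⟩ ⟨γ', ε'⟩ ⟨-, hmem'⟩ heq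
    simp only [Prod.mk.injEq] at heq ⊢
    refine ⟨heq.1, ?_⟩
    have hmem2 : (1 : ℕ) ∈ ε := hmem
    have hmem2' : (1 : ℕ) ∈ ε' := hmem'
    rw [← Multiset.cons_erase hmem2, ← Multiset.cons_erase hmem2', heq.2]
  rw [← himg, Set.ncard_image_of_injOn hinj]

theorem twoRowSSYT_card_eq_card_add_MPm_card (b m n r : ℕ)
    (hm : 1 ≤ m) (hr : 1 ≤ r) (h2 : r + b ≤ n) (h3 : 2 * b ≤ n) :
    (TwoRowSSYT m n b r).ncard
      = (TwoRowSSYT m n b (r - 1)).ncard + (MPmset m b r).ncard := by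
  rw [twoRow_ncard_eq b m n r h2 h3, twoRow_ncard_eq b m n (r - 1) (by omega) h3,
    PP_split_ncard b m r hm hr]
end

section
/- Let b, m, r ∈ ℕ with m ≥ 1 and r ≥ b + 1, and set n = r + b − 1 (so the tableaux below have shape (r−1, b)). Then |T(m, r+b−1, b)_r| + 1 = |T(m, r+b−1, b)_{r−1}| + |MP^m_b(r)|. -/
open scoped BigOperators

namespace SSYTAux

lemma mcard_le_sum {s : Multiset ℕ} (hs : ∀ x ∈ s, 0 < x) : Multiset.card s ≤ s.sum := by
  induction s using Multiset.induction with
  | empty => simp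
  | cons a s ih =>
    have ha := hs a (Multiset.mem_cons_self a s)
    have hi := ih (fun x hx => hs x (Multiset.mem_cons_of_mem hx))
    simp only [Multiset.card_cons, Multiset.sum_cons]
    omega

lemma eq_replicate_one {s : Multiset ℕ} (h0 : ∀ x ∈ s, 0 < x)
    (h : s.sum ≤ Multiset.card s) : s = Multiset.replicate (Multiset.card s) 1 := by
  rw [Multiset.eq_replicate]
  refine ⟨rfl, fun x hx => ?_⟩
  have hx0 := h0 x hx
  by_contra hx1
  obtain ⟨t, rfl⟩ := Multiset.exists_cons_of_mem hx
  have ht := mcard_le_sum (fun y hy => h0 y (Multiset.mem_cons_of_mem hy))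
  simp only [Multiset.sum_cons, Multiset.card_cons] at h
  omega

def padL (n : ℕ) (s : Multiset ℕ) : List ℕ :=
  List.replicate (n - Multiset.card s) 0 ++ s.sort (· ≤ ·)

lemma padL_length {n : ℕ} {s : Multiset ℕ} (h : Multiset.card s ≤ n) :
    (padL n s).length = n := by
  simp only [padL, List.length_append, List.length_replicate, Multiset.length_sort]
  omega

lemma padL_sorted (n : ℕ) (s : Multiset ℕ) : (padL n s).Pairwise (· ≤ ·) := by
  rw [padL, List.pairwise_append]
  refine ⟨?_, by apply Multiset.pairwise_sort, ?_⟩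
  · have : List.replicate (n - Multiset.card s) (0:ℕ) = List.ofFn (fun _ : Fin (n - Multiset.card s) => 0) := by
      simp
    rw [this]
    exact (List.sortedLE_ofFn_iff.2 monotone_const).pairwise
  · intro x hx y hy
    rw [List.eq_of_mem_replicate hx]
    exact Nat.zero_le y

lemma padL_coe (n : ℕ) (s : Multiset ℕ) :
    (↑(padL n s) : Multiset ℕ) = Multiset.replicate (n - Multiset.card s) 0 + s := by
  rw [padL, ← Multiset.coe_add, Multiset.coe_replicate, Multiset.sort_eq]

def padFun (n : ℕ) (s : Multiset ℕ) (i : Fin n) : ℕ := (padL n s).getD i 0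

lemma ofFn_padFun {n : ℕ} {s : Multiset ℕ} (h : Multiset.card s ≤ n) :
    List.ofFn (padFun n s) = padL n s := by
  apply List.ext_getElem
  · simp [padL_length h]
  · intro i h1 h2
    simp only [List.getElem_ofFn, padFun]
    exact List.getD_eq_getElem _ _ h2

lemma map_padFun_univ {n : ℕ} {s : Multiset ℕ} (h : Multiset.card s ≤ n) :
    Multiset.map (padFun n s) Finset.univ.val = (↑(padL n s) : Multiset ℕ) := by
  rw [Fin.univ_val_map, ofFn_padFun h]

lemma padFun_monotone {n : ℕ} {s : Multiset ℕ} (h : Multiset.card s ≤ n) :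
    Monotone (padFun n s) := by
  rw [← List.sortedLE_ofFn_iff, ofFn_padFun h]
  exact (padL_sorted n s).sortedLE

lemma sum_padFun {n : ℕ} {s : Multiset ℕ} (h : Multiset.card s ≤ n) :
    ∑ i, padFun n s i = s.sum := by
  rw [Finset.sum_eq_multiset_sum, map_padFun_univ h, padL_coe]
  simp

lemma padFun_eq_zero {n : ℕ} {s : Multiset ℕ} (h : Multiset.card s ≤ n) {i : Fin n}
    (hi : (i : ℕ) < n - Multiset.card s) : padFun n s i = 0 := by
  rw [padFun, padL, List.getD_append _ _ _ _ (by simpa using hi)]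
  rw [List.getD_eq_getElem _ _ (by simpa using hi)]
  simp

lemma padFun_mem {n : ℕ} {s : Multiset ℕ} (h : Multiset.card s ≤ n) (i : Fin n) :
    padFun n s i = 0 ∨ padFun n s i ∈ s := by
  have hi : (i : ℕ) < (padL n s).length := by rw [padL_length h]; exact i.isLt
  have hmem : padFun n s i ∈ padL n s := by
    rw [padFun, List.getD_eq_getElem _ _ hi]
    exact List.getElem_mem _
  rw [padL, List.mem_append] at hmem
  rcases hmem with h0 | hs
  · exact Or.inl (List.eq_of_mem_replicate h0)
  · exact Or.inr ((Multiset.mem_sort _).1 hs)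

lemma padFun_mem_of_card_eq {n : ℕ} {s : Multiset ℕ} (h : Multiset.card s = n) (i : Fin n) :
    padFun n s i ∈ s := by
  have hi : (i : ℕ) < (padL n s).length := by rw [padL_length h.le]; exact i.isLt
  have hmem : padFun n s i ∈ padL n s := by
    rw [padFun, List.getD_eq_getElem _ _ hi]
    exact List.getElem_mem _
  rw [padL, h, Nat.sub_self, List.replicate_zero, List.nil_append] at hmem
  exact (Multiset.mem_sort _).1 hmem

lemma padL_filter {n : ℕ} {s : Multiset ℕ} (hs : ∀ x ∈ s, 0 < x) :
    Multiset.filter (fun x => 0 < x) (↑(padL n s) : Multiset ℕ) = s := by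
  rw [padL_coe, Multiset.filter_add]
  rw [Multiset.filter_eq_nil.2 (fun a ha => by rw [Multiset.eq_of_mem_replicate ha]; omega)]
  rw [Multiset.filter_eq_self.2 hs, zero_add]

lemma sum_filter_pos (s : Multiset ℕ) : (s.filter (fun x => 0 < x)).sum = s.sum := by
  conv_rhs => rw [← Multiset.filter_add_not (fun x => 0 < x) s]
  rw [Multiset.sum_add]
  have h0 : (s.filter (fun a => ¬ 0 < a)).sum = 0 :=
    Multiset.sum_eq_zero (fun x hx => by have := (Multiset.mem_filter.1 hx).2; omega)
  omega

lemma monotone_eq_of_map_eq {n : ℕ} {f g : Fin n → ℕ} (hf : Monotone f) (hg : Monotone g)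
    (h : Multiset.map f Finset.univ.val = Multiset.map g Finset.univ.val) : f = g := by
  rw [Fin.univ_val_map, Fin.univ_val_map, Multiset.coe_eq_coe] at h
  exact List.ofFn_injective
    (List.Perm.eq_of_sortedLE (List.sortedLE_ofFn_iff.2 hf) (List.sortedLE_ofFn_iff.2 hg) h)

lemma full_eq {n : ℕ} (f : Fin n → ℕ) :
    Multiset.map f Finset.univ.val =
      Multiset.replicate
          (n - Multiset.card ((Multiset.map f Finset.univ.val).filter (fun x => 0 < x))) 0
        + (Multiset.map f Finset.univ.val).filter (fun x => 0 < x) := by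
  set M := Multiset.map f Finset.univ.val with hMdef
  have hM : Multiset.card M = n := by
    rw [hMdef, Multiset.card_map]
    exact Finset.card_fin n
  have hsplit := Multiset.filter_add_not (fun x => 0 < x) M
  have hcards : Multiset.card (M.filter (fun x => 0 < x))
      + Multiset.card (M.filter (fun a => ¬ 0 < a)) = n := by
    rw [← Multiset.card_add, hsplit, hM]
  have hrep : M.filter (fun a => ¬ 0 < a)
      = Multiset.replicate (n - Multiset.card (M.filter (fun x => 0 < x))) 0 := by
    rw [Multiset.eq_replicate]
    constructor
    · omega
    · intro x hx
      have := (Multiset.mem_filter.1 hx).2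
      omega
  calc M = M.filter (fun x => 0 < x) + M.filter (fun a => ¬ 0 < a) := hsplit.symm
    _ = _ := by rw [hrep, add_comm]

lemma monotone_eq_of_filter_eq {n : ℕ} {f g : Fin n → ℕ} (hf : Monotone f) (hg : Monotone g)
    (h : (Multiset.map f Finset.univ.val).filter (fun x => 0 < x)
       = (Multiset.map g Finset.univ.val).filter (fun x => 0 < x)) : f = g := by
  apply monotone_eq_of_map_eq hf hg
  rw [full_eq f, full_eq g, h]

lemma filter_map_comm {α β : Type*} (f : α → β) (p : β → Prop) [DecidablePred p]
    (s : Multiset α) :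
    (s.map f).filter p = (s.filter (fun a => p (f a))).map f := by
  induction s using Multiset.induction with
  | empty => simp
  | cons a s ih =>
    by_cases h : p (f a) <;> simp [h, ih]


lemma filter_map_padFun {n : ℕ} {s : Multiset ℕ} (h : Multiset.card s ≤ n)
    (hs : ∀ x ∈ s, 0 < x) :
    Multiset.filter (fun x => 0 < x) (Multiset.map (padFun n s) Finset.univ.val) = s := by
  rw [map_padFun_univ h, padL_filter hs]

def Phi {N k : ℕ} (t : (Fin N → ℕ) × (Fin k → ℕ)) : Multiset ℕ × Multiset ℕ :=
  (Multiset.map t.2 Finset.univ.val,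
   (Multiset.map t.1 Finset.univ.val).filter (fun x => 0 < x))

lemma Phi_injOn {m n k s : ℕ} : Set.InjOn Phi (TwoRowSSYT m n k s) := by
  rintro t ht u hu h
  obtain ⟨ht1, ht2, -⟩ := ht
  obtain ⟨hu1, hu2, -⟩ := hu
  have h2 := congrArg Prod.fst h
  have h1 := congrArg Prod.snd h
  exact Prod.ext (monotone_eq_of_filter_eq ht1 hu1 h1) (monotone_eq_of_map_eq ht2 hu2 h2)

lemma phi_mem_PP {m n k s : ℕ} (hk : k ≤ n - k) {t : (Fin (n-k) → ℕ) × (Fin k → ℕ)}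
    (ht : t ∈ TwoRowSSYT m n k s) : Phi t ∈ PPset k m s := by
  obtain ⟨hm1, hm2, hcol, hb1, hb2, hsum⟩ := ht
  have hpos2 : ∀ j : Fin k, 0 < t.2 j := by
    intro j
    have hj : (j : ℕ) < n - k := lt_of_lt_of_le j.isLt hk
    have h := hcol j j.isLt hj
    simp only [Fin.eta] at h
    omega
  simp only [PPset, Phi, Set.mem_setOf_eq]
  refine ⟨?_, ?_, ?_, ?_, ?_, ?_⟩
  · intro x hx
    obtain ⟨j, -, rfl⟩ := Multiset.mem_map.1 hx
    exact hpos2 j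
  · intro x hx
    exact (Multiset.mem_filter.1 hx).2
  · rw [Multiset.card_map]
    exact Finset.card_fin k
  · intro x hx
    obtain ⟨j, -, rfl⟩ := Multiset.mem_map.1 hx
    exact hb2 j
  · intro x hx
    obtain ⟨i, -, rfl⟩ := Multiset.mem_map.1 (Multiset.mem_filter.1 hx).1
    exact hb1 i
  · rw [sum_filter_pos, ← Finset.sum_eq_multiset_sum, ← Finset.sum_eq_multiset_sum]
    omega

lemma pad_mem_SSYT {m n k s : ℕ} {γ ε : Multiset ℕ} (hk : k ≤ n - k)
    (hγpos : ∀ x ∈ γ, 0 < x) (hεpos : ∀ x ∈ ε, 0 < x)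
    (hγcard : Multiset.card γ = k) (hγm : ∀ x ∈ γ, x ≤ m) (hεm : ∀ x ∈ ε, x ≤ m)
    (hεcard : Multiset.card ε + k ≤ n - k)
    (hsum : γ.sum + ε.sum = s) :
    (padFun (n-k) ε, padFun k γ) ∈ TwoRowSSYT m n k s
      ∧ Phi (padFun (n-k) ε, padFun k γ) = (γ, ε) := by
  have hε' : Multiset.card ε ≤ n - k := by omega
  have hγ' : Multiset.card γ ≤ k := hγcard.le
  constructor
  · simp only [TwoRowSSYT, Set.mem_setOf_eq]
    refine ⟨padFun_monotone hε', padFun_monotone hγ', ?_, ?_, ?_, ?_⟩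
    · intro j hjk hjnk
      have h0 : padFun (n-k) ε ⟨j, hjnk⟩ = 0 := padFun_eq_zero hε' (by simp; omega)
      have h1 : 0 < padFun k γ ⟨j, hjk⟩ :=
        hγpos _ (padFun_mem_of_card_eq hγcard ⟨j, hjk⟩)
      omega
    · intro i
      rcases padFun_mem hε' i with h | h
      · omega
      · exact hεm _ h
    · intro j
      exact hγm _ (padFun_mem_of_card_eq hγcard j)
    · rw [sum_padFun hε', sum_padFun hγ']
      omega
  · have hΦ1 : Multiset.map (padFun k γ) Finset.univ.val = γ := by
      rw [map_padFun_univ hγ', padL_coe, hγcard, Nat.sub_self, Multiset.replicate_zero, zero_add]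
    have hΦ2 := filter_map_padFun hε' hεpos
    simp only [Phi, Prod.mk.injEq]
    exact ⟨hΦ1, hΦ2⟩

lemma image_phi_eq {m n k s : ℕ} (hk : k ≤ n - k) (hs : s ≤ n - k) :
    Phi '' TwoRowSSYT m n k s = PPset k m s := by
  apply Set.Subset.antisymm
  · rintro _ ⟨t, ht, rfl⟩
    exact phi_mem_PP hk ht
  · rintro ⟨γ, ε⟩ hp
    simp only [PPset, Set.mem_setOf_eq] at hp
    obtain ⟨hγpos, hεpos, hγcard, hγm, hεm, hsum⟩ := hp
    have h1 : k ≤ γ.sum := hγcard ▸ mcard_le_sum hγpos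
    have h2 : Multiset.card ε ≤ ε.sum := mcard_le_sum hεpos
    have hεcard : Multiset.card ε + k ≤ n - k := by omega
    obtain ⟨hmem, heq⟩ := pad_mem_SSYT hk hγpos hεpos hγcard hγm hεm hεcard hsum
    exact ⟨_, hmem, heq⟩

lemma image_phi_eq_r {m n k s : ℕ} (hk : k ≤ n - k) (hs : s = (n - k) + 1) :
    Phi '' TwoRowSSYT m n k s
      = PPset k m s \ {(Multiset.replicate k 1, Multiset.replicate (s - k) 1)} := by
  apply Set.Subset.antisymm
  · rintro _ ⟨t, ht, rfl⟩
    refine ⟨phi_mem_PP hk ht, ?_⟩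
    intro hbad
    simp only [Set.mem_singleton_iff, Phi, Prod.mk.injEq] at hbad
    obtain ⟨hbad2, hbad1⟩ := hbad
    obtain ⟨hm1, hm2, hcol, hb1, hb2, hsum⟩ := ht
    have ht2 : ∀ j : Fin k, t.2 j = 1 := by
      intro j
      apply Multiset.eq_of_mem_replicate (n := k)
      rw [← hbad2]
      exact Multiset.mem_map_of_mem _ (Finset.mem_univ_val j)
    have hcardS : (Finset.univ.filter (fun i => 0 < t.1 i)).card = s - k := by
      have h := congrArg Multiset.card hbad1
      rw [Multiset.card_replicate, filter_map_comm, Multiset.card_map] at h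
      exact h
    have hsub : Finset.univ.filter (fun i => 0 < t.1 i)
        ⊆ Finset.univ.filter (fun i : Fin (n-k) => k ≤ (i : ℕ)) := by
      intro i hi
      rw [Finset.mem_filter] at hi
      rw [Finset.mem_filter]
      refine ⟨Finset.mem_univ i, ?_⟩
      by_contra hik
      push_neg at hik
      have hk1 : k - 1 < n - k := by omega
      have hklt : k - 1 < k := by omega
      have hle : t.1 i ≤ t.1 ⟨k-1, hk1⟩ := hm1 (by rw [Fin.le_def]; simp only [Fin.val_mk]; omega)
      have hcol' := hcol (k-1) hklt hk1
      have hval := ht2 ⟨k-1, hklt⟩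
      have hipos := hi.2
      omega
    have hcard2 : (Finset.univ.filter (fun i : Fin (n-k) => k ≤ (i : ℕ))).card ≤ n - k - k := by
      calc (Finset.univ.filter (fun i : Fin (n-k) => k ≤ (i : ℕ))).card
          ≤ (Finset.range (n - k - k)).card := by
            apply Finset.card_le_card_of_injOn (fun i : Fin (n-k) => (i : ℕ) - k)
            · intro i hi
              rw [Finset.mem_coe, Finset.mem_filter] at hi
              rw [Finset.mem_coe, Finset.mem_range]
              dsimp only
              have := i.isLt
              omega
            · intro i hi j hj hij
              rw [Finset.mem_coe, Finset.mem_filter] at hi hj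
              have hij' : (i : ℕ) - k = (j : ℕ) - k := hij
              exact Fin.ext (by omega)
        _ = n - k - k := Finset.card_range _
    have hfin := Finset.card_le_card hsub
    omega
  · rintro ⟨γ, ε⟩ ⟨hp, hnotbad⟩
    simp only [PPset, Set.mem_setOf_eq] at hp
    obtain ⟨hγpos, hεpos, hγcard, hγm, hεm, hsum⟩ := hp
    have h1 : k ≤ γ.sum := hγcard ▸ mcard_le_sum hγpos
    have h2 : Multiset.card ε ≤ ε.sum := mcard_le_sum hεpos
    by_cases hc : Multiset.card ε + k ≤ n - k
    · obtain ⟨hmem, heq⟩ := pad_mem_SSYT hk hγpos hεpos hγcard hγm hεm hc hsum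
      exact ⟨_, hmem, heq⟩
    · exfalso
      apply hnotbad
      simp only [Set.mem_singleton_iff, Prod.mk.injEq]
      have hγsum : γ.sum = k := by omega
      have hεsum : ε.sum = Multiset.card ε := by omega
      have hεc : Multiset.card ε = s - k := by omega
      constructor
      · have h := eq_replicate_one hγpos (by rw [hγsum, hγcard])
        rwa [hγcard] at h
      · have h := eq_replicate_one hεpos hεsum.le
        rwa [hεc] at h



lemma PPset_finite (b m r : ℕ) : (PPset b m r).Finite := by
  have hsub : PPset b m r ⊆
      ⋃ a ∈ Finset.range (r + 1),
        (fun q : Nat.Partition a × Nat.Partition (r - a) => (q.1.parts, q.2.parts)) ''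
          Set.univ := by
    rintro ⟨γ, ε⟩ hp
    simp only [PPset, Set.mem_setOf_eq] at hp
    obtain ⟨hγpos, hεpos, -, -, -, hsum⟩ := hp
    have ha : γ.sum ≤ r := by omega
    have hmem : ((γ, ε) : Multiset ℕ × Multiset ℕ) ∈
        (fun q : Nat.Partition γ.sum × Nat.Partition (r - γ.sum) =>
          (q.1.parts, q.2.parts)) '' Set.univ :=
      ⟨((⟨γ, fun {x} hx => hγpos x hx, rfl⟩ : Nat.Partition γ.sum),
        (⟨ε, fun {x} hx => hεpos x hx, by omega⟩ : Nat.Partition (r - γ.sum))),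
        Set.mem_univ _, rfl⟩
    exact Set.mem_biUnion (Finset.mem_range.2 (show γ.sum < r + 1 by omega)) hmem
  exact Set.Finite.subset
    (Set.Finite.biUnion (Finset.range (r+1)).finite_toSet
      (fun a _ => Set.finite_univ.image _)) hsub

lemma PP_recursion (b m r : ℕ) (hm : 1 ≤ m) (hr : 1 ≤ r) :
    (PPset b m r).ncard = (PPset b m (r - 1)).ncard + (MPmset m b r).ncard := by
  classical
  set A : Set (Multiset ℕ × Multiset ℕ) := {p | p ∈ PPset b m r ∧ (1 : ℕ) ∈ p.2} with hA
  have hB : {p | p ∈ PPset b m r ∧ (1 : ℕ) ∉ p.2} = MPmset m b r := by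
    ext ⟨γ, ε⟩
    simp only [Set.mem_setOf_eq, PPset, MPmset, MPset]
    constructor
    · rintro ⟨⟨h1, h2, h3, h4, h5, h6⟩, h7⟩
      exact ⟨⟨h1, h2, h3, fun x hx hx1 => h7 (hx1 ▸ hx), h6⟩, h4, h5⟩
    · rintro ⟨⟨h1, h2, h3, h4, h6⟩, h5a, h5b⟩
      exact ⟨⟨h1, h2, h3, h5a, h5b, h6⟩, fun h => h4 1 h rfl⟩
  have hunion : PPset b m r = A ∪ MPmset m b r := by
    rw [← hB]
    ext p
    by_cases h : (1:ℕ) ∈ p.2 <;> simp [hA, Set.mem_setOf_eq, h]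
  have hdisj : Disjoint A (MPmset m b r) := by
    rw [← hB]
    rw [Set.disjoint_left]
    rintro p ⟨-, h1⟩ ⟨-, h2⟩
    exact h2 h1
  have hAfin : A.Finite := (PPset_finite b m r).subset (fun p hp => hp.1)
  have hBfin : (MPmset m b r).Finite := by
    rw [← hB]
    exact (PPset_finite b m r).subset (fun p hp => hp.1)
  have hAcard : A.ncard = (PPset b m (r - 1)).ncard := by
    rw [← Set.ncard_image_of_injOn (f := fun p : Multiset ℕ × Multiset ℕ => (p.1, p.2.erase 1))
      (s := A) ?_]
    · congr 1
      ext ⟨γ, ε⟩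
      constructor
      · rintro ⟨⟨γ', ε'⟩, ⟨hp, hmem⟩, heq⟩
        have hmem' : (1 : ℕ) ∈ ε' := hmem
        simp only [Prod.mk.injEq] at heq
        obtain ⟨rfl, rfl⟩ := heq
        simp only [PPset, Set.mem_setOf_eq] at hp ⊢
        obtain ⟨h1, h2, h3, h4, h5, h6⟩ := hp
        have hsum' : ε'.sum = 1 + (ε'.erase 1).sum := by
          conv_lhs => rw [← Multiset.cons_erase hmem']
          rw [Multiset.sum_cons]
        refine ⟨h1, fun x hx => h2 x (Multiset.mem_of_mem_erase hx), h3, h4,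
          fun x hx => h5 x (Multiset.mem_of_mem_erase hx), by omega⟩
      · intro hp
        simp only [PPset, Set.mem_setOf_eq] at hp
        obtain ⟨h1, h2, h3, h4, h5, h6⟩ := hp
        refine ⟨(γ, 1 ::ₘ ε), ⟨?_, Multiset.mem_cons_self 1 ε⟩, ?_⟩
        · simp only [PPset, Set.mem_setOf_eq]
          refine ⟨h1, ?_, h3, h4, ?_, ?_⟩
          · intro x hx
            rcases Multiset.mem_cons.1 hx with rfl | hx
            · omega
            · exact h2 x hx
          · intro x hx
            rcases Multiset.mem_cons.1 hx with rfl | hx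
            · exact hm
            · exact h5 x hx
          · rw [Multiset.sum_cons]
            omega
        · show (γ, (1 ::ₘ ε).erase 1) = (γ, ε)
          rw [Multiset.erase_cons_head]
    · rintro ⟨γ, ε⟩ ⟨-, h1⟩ ⟨γ', ε'⟩ ⟨-, h1'⟩ heq
      simp only [Prod.mk.injEq] at heq ⊢
      obtain ⟨rfl, h2⟩ := heq
      refine ⟨rfl, ?_⟩
      calc ε = 1 ::ₘ ε.erase 1 := (Multiset.cons_erase h1).symm
        _ = 1 ::ₘ ε'.erase 1 := by rw [h2]
        _ = ε' := Multiset.cons_erase h1'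
  rw [hunion, Set.ncard_union_eq hdisj hAfin hBfin, hAcard]

end SSYTAux

/-- For `m ≥ 1` and `r ≥ b + 1`, with `n = r + b − 1` (so the tableaux
have shape `(r−1, b)`), one has
`|T(m, r+b−1, b)_r| + 1 = |T(m, r+b−1, b)_{r−1}| + |MP^m_b(r)|`. -/
theorem twoRowSSYT_card_add_one_eq (b m r : ℕ) (hm : 1 ≤ m) (hr : b + 1 ≤ r) :
    (TwoRowSSYT m (r + b - 1) b r).ncard + 1
      = (TwoRowSSYT m (r + b - 1) b (r - 1)).ncard + (MPmset m b r).ncard := by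
  have hk : b ≤ (r + b - 1) - b := by omega
  have h1 : (TwoRowSSYT m (r + b - 1) b (r - 1)).ncard = (PPset b m (r - 1)).ncard := by
    rw [← SSYTAux.image_phi_eq (m := m) (n := r + b - 1) (k := b) (s := r - 1) hk (by omega),
      Set.ncard_image_of_injOn SSYTAux.Phi_injOn]
  have h2 : (TwoRowSSYT m (r + b - 1) b r).ncard
      = (PPset b m r \ {(Multiset.replicate b 1, Multiset.replicate (r - b) 1)}).ncard := by
    rw [← SSYTAux.image_phi_eq_r (m := m) (n := r + b - 1) (k := b) (s := r) hk (by omega),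
      Set.ncard_image_of_injOn SSYTAux.Phi_injOn]
  have hbadmem : ((Multiset.replicate b 1, Multiset.replicate (r - b) 1)) ∈ PPset b m r := by
    refine ⟨?_, ?_, ?_, ?_, ?_, ?_⟩
    · intro x hx
      rw [Multiset.eq_of_mem_replicate hx]
      omega
    · intro x hx
      rw [Multiset.eq_of_mem_replicate hx]
      omega
    · exact Multiset.card_replicate _ _
    · intro x hx
      rw [Multiset.eq_of_mem_replicate hx]
      omega
    · intro x hx
      rw [Multiset.eq_of_mem_replicate hx]
      omega
    · rw [Multiset.sum_replicate, Multiset.sum_replicate, smul_eq_mul, smul_eq_mul]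
      omega
  have h3 := Set.ncard_diff_singleton_add_one hbadmem (SSYTAux.PPset_finite b m r)
  have h4 := SSYTAux.PP_recursion b m r hm (by omega)
  omega
end

section
/- Let b ≥ 1 and r ≥ 0 be natural numbers. Then the number |MP_b(r)| of b-marked partitions of r equals the coefficient of X^r in the formal power series X^b · (∏_{i=2}^{b} (1 − X^i))^{−1} · (∏_{i=1}^{r} (1 − X^i))^{−1} ∈ ℚ⟦X⟧. (Equivalently, the generating function ∑_{r≥0} |MP_b(r)| z^r equals z^b/((1−z^2)(1−z^3)⋯(1−z^b)) times the partition generating function ∏_{i≥1}(1−z^i)^{−1}; truncating the infinite product at i = r does not change the coefficient of X^r.) -/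
open scoped BigOperators

namespace MPaux
noncomputable section
open PowerSeries Finset
open scoped Classical

variable {α : Type*}

def Bset (s : Finset ℕ) (n : ℕ) : Set (Multiset ℕ) := {m | (∀ x ∈ m, x ∈ s) ∧ m.sum = n}

def Aset (b n : ℕ) : Set (Multiset ℕ) :=
  {γ | (∀ x ∈ γ, 0 < x) ∧ Multiset.card γ = b ∧ γ.sum = n}

lemma finite_part (n : ℕ) : {m : Multiset ℕ | (∀ x ∈ m, 0 < x) ∧ m.sum = n}.Finite := by
  apply Set.Finite.subset (Set.finite_range (fun p : n.Partition => p.parts))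
  rintro m ⟨h1, h2⟩; exact ⟨⟨m, fun hx => h1 _ hx, h2⟩, rfl⟩

lemma Bset_finite {s : Finset ℕ} (hs : ∀ i ∈ s, 0 < i) (n : ℕ) : (Bset s n).Finite := by
  apply (finite_part n).subset
  rintro m ⟨h1, h2⟩
  exact ⟨fun x hx => hs x (h1 x hx), h2⟩

lemma Icc_pos (b : ℕ) : ∀ i ∈ Finset.Icc 1 b, 0 < i := by
  intro i hi; rw [Finset.mem_Icc] at hi; omega

lemma Aset_finite (b n : ℕ) : (Aset b n).Finite := by
  apply (finite_part n).subset
  rintro m ⟨h1, h2, h3⟩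
  exact ⟨h1, h3⟩

lemma card_le_sum {m : Multiset ℕ} (h : ∀ x ∈ m, 0 < x) : Multiset.card m ≤ m.sum := by
  simpa using Multiset.card_nsmul_le_sum (a := 1) h

lemma two_card_le_sum {m : Multiset ℕ} (h : ∀ x ∈ m, 2 ≤ x) :
    2 * Multiset.card m ≤ m.sum := by
  simpa [mul_comm] using Multiset.card_nsmul_le_sum (a := 2) h

lemma sum_map_succ (m : Multiset ℕ) :
    (m.map (· + 1)).sum = m.sum + Multiset.card m := by
  induction m using Multiset.induction_on with
  | empty => simp
  | cons a s ih => simp only [Multiset.map_cons, Multiset.sum_cons, Multiset.card_cons, ih]; omega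

lemma ncard_split (S : Set (Multiset ℕ)) (hfin : S.Finite) (p : Multiset ℕ → Prop) :
    S.ncard = {m | m ∈ S ∧ p m}.ncard + {m | m ∈ S ∧ ¬ p m}.ncard := by
  rw [← Set.ncard_union_eq ?_ (hfin.subset fun m hm => hm.1) (hfin.subset fun m hm => hm.1)]
  · congr 1
    ext m
    by_cases hp : p m <;> simp [hp]
  · rw [Set.disjoint_left]
    rintro m ⟨-, h1⟩ ⟨-, h2⟩
    exact h2 h1

lemma base_b0 (n : ℕ) : (Aset 0 (n + 0)).ncard = (Bset (Finset.Icc 1 0) n).ncard := by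
  have hB : ∀ m, m ∈ Bset (Finset.Icc 1 0) n → m = 0 ∧ n = 0 := by
    rintro m ⟨h, hsum⟩
    have hm : m = 0 := by
      by_contra hm
      obtain ⟨x, hx⟩ := Multiset.exists_mem_of_ne_zero hm
      have := h x hx
      simp at this
    subst hm
    simp at hsum
    exact ⟨rfl, hsum.symm⟩
  rcases Nat.eq_zero_or_pos n with rfl | hn
  · have h1 : Aset 0 (0 + 0) = {0} := by
      ext γ
      simp only [Aset, Set.mem_setOf_eq, Set.mem_singleton_iff]
      constructor
      · rintro ⟨-, h2, -⟩
        exact Multiset.card_eq_zero.mp h2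
      · rintro rfl; simp
    have h2 : Bset (Finset.Icc 1 0) 0 = {0} := by
      ext m
      constructor
      · intro hm; exact (hB m hm).1
      · rintro rfl; exact ⟨by simp, by simp⟩
    rw [h1, h2]
  · have h1 : Aset 0 (n + 0) = ∅ := by
      ext γ
      simp only [Aset, Set.mem_setOf_eq, Set.mem_empty_iff_false, iff_false]
      rintro ⟨-, h2, h3⟩
      rw [Multiset.card_eq_zero] at h2
      subst h2
      simp at h3
      omega
    have h2 : Bset (Finset.Icc 1 0) n = ∅ := by
      ext m
      simp only [Set.mem_empty_iff_false, iff_false]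
      intro hm
      have := (hB m hm).2
      omega
    rw [h1, h2]

lemma base_n0 (b : ℕ) : (Aset b (0 + b)).ncard = (Bset (Finset.Icc 1 b) 0).ncard := by
  have h1 : Aset b (0 + b) = {Multiset.replicate b 1} := by
    ext γ
    simp only [Aset, Set.mem_setOf_eq, Set.mem_singleton_iff]
    constructor
    · rintro ⟨h1, h2, h3⟩
      rw [Multiset.eq_replicate]
      refine ⟨h2, fun x hx => ?_⟩
      by_contra hx1
      have hx2 : 2 ≤ x := by have := h1 x hx; omega
      have hmem := Multiset.cons_erase hx
      have hcard : Multiset.card (γ.erase x) + 1 = b := by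
        rw [← h2, ← hmem]; simp
      have hsum : x + (γ.erase x).sum = 0 + b := by
        rw [← h3, ← hmem]; simp
      have := card_le_sum (m := γ.erase x) (fun y hy => h1 y (Multiset.mem_of_mem_erase hy))
      omega
    · rintro rfl
      refine ⟨fun x hx => ?_, by simp, by simp [Multiset.sum_replicate]⟩
      rw [Multiset.eq_of_mem_replicate hx]
      omega
  have h2 : Bset (Finset.Icc 1 b) 0 = {0} := by
    ext m
    simp only [Bset, Set.mem_setOf_eq, Set.mem_singleton_iff]
    constructor
    · rintro ⟨h, hsum⟩
      by_contra hm
      obtain ⟨x, hx⟩ := Multiset.exists_mem_of_ne_zero hm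
      have h1 := h x hx
      rw [Finset.mem_Icc] at h1
      have hle := Multiset.single_le_sum (fun y _ => Nat.zero_le y) x hx
      omega
    · rintro rfl; simp
  rw [h1, h2, Set.ncard_singleton, Set.ncard_singleton]

theorem Aset_card_aux : ∀ N b n, b + n ≤ N →
    (Aset b (n + b)).ncard = (Bset (Finset.Icc 1 b) n).ncard := by
  intro N
  induction N with
  | zero =>
    intro b n hbn
    obtain ⟨rfl, rfl⟩ : b = 0 ∧ n = 0 := by omega
    exact base_b0 0
  | succ N ih =>
    intro b n hbn
    rcases Nat.eq_zero_or_pos b with rfl | hb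
    · exact base_b0 n
    rcases Nat.eq_zero_or_pos n with rfl | hn
    · exact base_n0 b
    obtain ⟨c, rfl⟩ : ∃ c, b = c + 1 := ⟨b - 1, by omega⟩
    -- split LHS by whether 1 is a part
    have hsplitL := ncard_split (Aset (c + 1) (n + (c + 1))) (Aset_finite _ _)
      (fun γ => (1 : ℕ) ∈ γ)
    have hS1 : {γ | γ ∈ Aset (c + 1) (n + (c + 1)) ∧ (1 : ℕ) ∈ γ}
        = (fun δ => (1 : ℕ) ::ₘ δ) '' Aset c (n + c) := by
      ext γ
      constructor
      · rintro ⟨⟨h1, h2, h3⟩, hmem⟩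
        refine ⟨γ.erase 1, ⟨fun x hx => h1 x (Multiset.mem_of_mem_erase hx), ?_, ?_⟩,
          Multiset.cons_erase hmem⟩
        · have : Multiset.card (γ.erase 1) + 1 = c + 1 := by
            rw [← Multiset.card_cons, Multiset.cons_erase hmem, h2]
          omega
        · have : 1 + (γ.erase 1).sum = n + (c + 1) := by
            rw [← Multiset.sum_cons, Multiset.cons_erase hmem, h3]
          omega
      · rintro ⟨δ, ⟨h1, h2, h3⟩, rfl⟩
        refine ⟨⟨fun x hx => ?_, by simp [h2], by simp [Multiset.sum_cons, h3]; omega⟩,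
          Multiset.mem_cons_self 1 δ⟩
        rcases Multiset.mem_cons.mp hx with rfl | hx
        · omega
        · exact h1 x hx
    have hS1card : {γ | γ ∈ Aset (c + 1) (n + (c + 1)) ∧ (1 : ℕ) ∈ γ}.ncard
        = (Bset (Finset.Icc 1 c) n).ncard := by
      rw [hS1, Set.ncard_image_of_injective _ (fun x y h => (Multiset.cons_inj_right 1).mp h)]
      exact ih c n (by omega)
    -- split RHS by whether c+1 is a part
    have hsplitR := ncard_split (Bset (Finset.Icc 1 (c + 1)) n)
      (Bset_finite (Icc_pos (c + 1)) n) (fun m => (c + 1 : ℕ) ∈ m)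
    have hT1 : {m | m ∈ Bset (Finset.Icc 1 (c + 1)) n ∧ ¬ (c + 1 : ℕ) ∈ m}
        = Bset (Finset.Icc 1 c) n := by
      ext m
      constructor
      · rintro ⟨⟨h1, h2⟩, hmem⟩
        refine ⟨fun x hx => ?_, h2⟩
        have h3 := h1 x hx
        rw [Finset.mem_Icc] at h3 ⊢
        have : x ≠ c + 1 := fun e => hmem (e ▸ hx)
        omega
      · rintro ⟨h1, h2⟩
        refine ⟨⟨fun x hx => ?_, h2⟩, fun hmem => ?_⟩
        · have h3 := h1 x hx
          rw [Finset.mem_Icc] at h3 ⊢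
          omega
        · have := h1 _ hmem
          rw [Finset.mem_Icc] at this
          omega
    rcases lt_or_ge n (c + 1) with hcn | hcn
    · -- n < c + 1 : both second pieces are empty
      have hS2 : {γ | γ ∈ Aset (c + 1) (n + (c + 1)) ∧ ¬ (1 : ℕ) ∈ γ} = ∅ := by
        ext γ
        simp only [Set.mem_setOf_eq, Set.mem_empty_iff_false, iff_false, not_and]
        rintro ⟨h1, h2, h3⟩ hmem
        have h2x : ∀ x ∈ γ, 2 ≤ x := by
          intro x hx
          have := h1 x hx
          have : x ≠ 1 := fun e => hmem (e ▸ hx)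
          omega
        have := two_card_le_sum h2x
        rw [h2, h3] at this
        omega
      have hT2 : {m | m ∈ Bset (Finset.Icc 1 (c + 1)) n ∧ (c + 1 : ℕ) ∈ m} = ∅ := by
        ext m
        simp only [Set.mem_setOf_eq, Set.mem_empty_iff_false, iff_false, not_and]
        rintro ⟨h1, h2⟩ hmem
        have hle := Multiset.single_le_sum (fun y _ => Nat.zero_le y) _ hmem
        omega
      rw [hsplitL, hS1card, hS2, hsplitR, hT1, hT2]
      simp
    · -- c + 1 ≤ n
      have hS2 : {γ | γ ∈ Aset (c + 1) (n + (c + 1)) ∧ ¬ (1 : ℕ) ∈ γ}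
          = Multiset.map (· + 1) '' Aset (c + 1) n := by
        ext γ
        constructor
        · rintro ⟨⟨h1, h2, h3⟩, hmem⟩
          have h2x : ∀ x ∈ γ, 2 ≤ x := by
            intro x hx
            have := h1 x hx
            have : x ≠ 1 := fun e => hmem (e ▸ hx)
            omega
          have hγ : (γ.map (· - 1)).map (· + 1) = γ := by
            rw [Multiset.map_map]
            conv_rhs => rw [← Multiset.map_id γ]
            apply Multiset.map_congr rfl
            intro x hx
            have := h2x x hx
            simp
            omega
          refine ⟨γ.map (· - 1), ⟨?_, ?_, ?_⟩, hγ⟩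
          · intro x hx
            obtain ⟨y, hy, rfl⟩ := Multiset.mem_map.mp hx
            have := h2x y hy
            omega
          · simp [h2]
          · have hs := sum_map_succ (γ.map (· - 1))
            rw [hγ] at hs
            simp only [Multiset.card_map, h2] at hs
            omega
        · rintro ⟨δ, ⟨h1, h2, h3⟩, rfl⟩
          refine ⟨⟨fun x hx => ?_, by simp [h2], ?_⟩, fun hmem => ?_⟩
          · obtain ⟨y, hy, rfl⟩ := Multiset.mem_map.mp hx
            omega
          · rw [sum_map_succ, h2, h3]
          · obtain ⟨y, hy, hy1⟩ := Multiset.mem_map.mp hmem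
            have := h1 y hy
            omega
      have hS2card : {γ | γ ∈ Aset (c + 1) (n + (c + 1)) ∧ ¬ (1 : ℕ) ∈ γ}.ncard
          = (Bset (Finset.Icc 1 (c + 1)) (n - (c + 1))).ncard := by
        rw [hS2, Set.ncard_image_of_injective _
          (Multiset.map_injective (fun x y h => by omega))]
        have hn' : n = (n - (c + 1)) + (c + 1) := by omega
        rw [show Aset (c + 1) n = Aset (c + 1) ((n - (c + 1)) + (c + 1)) by rw [← hn']]
        exact ih (c + 1) (n - (c + 1)) (by omega)
      have hT2 : {m | m ∈ Bset (Finset.Icc 1 (c + 1)) n ∧ (c + 1 : ℕ) ∈ m}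
          = (fun δ => (c + 1 : ℕ) ::ₘ δ) '' Bset (Finset.Icc 1 (c + 1)) (n - (c + 1)) := by
        ext m
        constructor
        · rintro ⟨⟨h1, h2⟩, hmem⟩
          refine ⟨m.erase (c + 1), ⟨fun x hx => h1 x (Multiset.mem_of_mem_erase hx), ?_⟩,
            Multiset.cons_erase hmem⟩
          have : (c + 1) + (m.erase (c + 1)).sum = n := by
            rw [← Multiset.sum_cons, Multiset.cons_erase hmem, h2]
          omega
        · rintro ⟨δ, ⟨h1, h2⟩, rfl⟩
          refine ⟨⟨fun x hx => ?_, ?_⟩, Multiset.mem_cons_self _ _⟩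
          · rcases Multiset.mem_cons.mp hx with rfl | hx
            · rw [Finset.mem_Icc]; omega
            · exact h1 x hx
          · rw [Multiset.sum_cons, h2]; omega
      have hT2card : {m | m ∈ Bset (Finset.Icc 1 (c + 1)) n ∧ (c + 1 : ℕ) ∈ m}.ncard
          = (Bset (Finset.Icc 1 (c + 1)) (n - (c + 1))).ncard := by
        rw [hT2, Set.ncard_image_of_injective _
          (fun x y h => (Multiset.cons_inj_right _).mp h)]
      rw [hsplitL, hS1card, hS2card, hsplitR, hT1, hT2card]
      omega

theorem Aset_card (b n : ℕ) (h : b ≤ n) :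
    (Aset b n).ncard = (Bset (Finset.Icc 1 b) (n - b)).ncard := by
  have : n = (n - b) + b := by omega
  rw [show Aset b n = Aset b ((n - b) + b) by rw [← this]]
  exact Aset_card_aux (b + (n - b)) b (n - b) le_rfl

lemma Aset_empty {b n : ℕ} (h : n < b) : Aset b n = ∅ := by
  ext γ
  simp only [Aset, Set.mem_setOf_eq, Set.mem_empty_iff_false, iff_false]
  rintro ⟨h1, h2, h3⟩
  have := card_le_sum h1
  omega

def indicatorSeries (α : Type*) [Semiring α] (s : Set ℕ) : PowerSeries α :=
  PowerSeries.mk fun n => if n ∈ s then 1 else 0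

theorem coeff_indicator (s : Set ℕ) [Semiring α] (n : ℕ) :
    coeff (R := α) n (indicatorSeries _ s) = if n ∈ s then 1 else 0 :=
  coeff_mk _ _

theorem constantCoeff_indicator (s : Set ℕ) [Semiring α] :
    constantCoeff (R := α) (indicatorSeries _ s) = if 0 ∈ s then 1 else 0 :=
  rfl

theorem num_series' [Field α] (i : ℕ) :
    (1 - (X : PowerSeries α) ^ (i + 1))⁻¹ = indicatorSeries α {k | i + 1 ∣ k} := by
  rw [PowerSeries.inv_eq_iff_mul_eq_one]
  · ext n
    cases n with
    | zero => simp [mul_sub, zero_pow, constantCoeff_indicator]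
    | succ n =>
      simp only [coeff_one, if_false, mul_sub, mul_one, coeff_indicator,
        LinearMap.map_sub, reduceCtorEq]
      simp_rw [coeff_mul, coeff_X_pow, coeff_indicator, @boole_mul _ _ _ _]
      rw [@sum_ite _ _ _ _ _ (fun _ => Classical.propDecidable _), sum_ite]
      simp_rw [@filter_filter _ _ _ _ _, sum_const_zero, add_zero, sum_const, nsmul_eq_mul, mul_one,
        sub_eq_iff_eq_add, zero_add]
      symm
      split_ifs with h
      · suffices #{a ∈ antidiagonal (n + 1) | i + 1 ∣ a.fst ∧ a.snd = i + 1} = 1 by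
          simp only [Set.mem_setOf_eq]; convert congr_arg ((↑) : ℕ → α) this; norm_cast
        rw [card_eq_one]
        cases' h with p hp
        refine ⟨((i + 1) * (p - 1), i + 1), ?_⟩
        ext ⟨a₁, a₂⟩
        simp only [mem_filter, Prod.mk_inj, HasAntidiagonal.mem_antidiagonal, mem_singleton]
        constructor
        · rintro ⟨a_left, ⟨a, rfl⟩, rfl⟩
          refine ⟨?_, rfl⟩
          rw [Nat.mul_sub_left_distrib, ← hp, ← a_left, mul_one, Nat.add_sub_cancel]
        · rintro ⟨rfl, rfl⟩
          match p with
          | 0 => rw [mul_zero] at hp; cases hp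
          | p + 1 => rw [hp]; simp [mul_add]
      · suffices #{a ∈ antidiagonal (n + 1) | i + 1 ∣ a.fst ∧ a.snd = i + 1} = 0 by
          simp only [Set.mem_setOf_eq]; convert congr_arg ((↑) : ℕ → α) this; norm_cast
        rw [card_eq_zero]
        apply eq_empty_of_forall_notMem
        simp only [Prod.forall, mem_filter, not_and, HasAntidiagonal.mem_antidiagonal]
        rintro _ h₁ h₂ ⟨a, rfl⟩ rfl
        apply h
        simp [← h₂]
  · simp [zero_pow]

-- The main workhorse of the partition theorem proof.
theorem partialGF_prop (α : Type*) [CommSemiring α] (n : ℕ) (s : Finset ℕ) (hs : ∀ i ∈ s, 0 < i)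
    (c : ℕ → Set ℕ) (hc : ∀ i, i ∉ s → 0 ∈ c i) :
    #{p : n.Partition | (∀ j, p.parts.count j ∈ c j) ∧ ∀ j ∈ p.parts, j ∈ s} =
      coeff (R := α) n (∏ i ∈ s, indicatorSeries α ((· * i) '' c i)) := by
  simp_rw [coeff_prod, coeff_indicator, prod_boole, sum_boole]
  apply congr_arg
  simp only [mem_univ, forall_true_left, not_and, not_forall, exists_prop,
    Set.mem_image, not_exists]
  set φ : (a : Nat.Partition n) →
    a ∈ filter (fun p ↦ (∀ (j : ℕ), Multiset.count j p.parts ∈ c j) ∧ ∀ j ∈ p.parts, j ∈ s) univ →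
    ℕ →₀ ℕ := fun p _ => {
      toFun := fun i => Multiset.count i p.parts • i
      support := Finset.filter (fun i => i ≠ 0) p.parts.toFinset
      mem_support_toFun := fun a => by
        simp only [smul_eq_mul, ne_eq, mul_eq_zero, Multiset.count_eq_zero]
        rw [not_or, not_not]
        simp only [Multiset.mem_toFinset, not_not, mem_filter] }
  refine Finset.card_bij φ ?_ ?_ ?_
  · intro a ha
    simp only [φ, not_forall, not_exists, not_and, exists_prop, mem_filter]
    rw [mem_finsuppAntidiag]
    dsimp only [ne_eq, smul_eq_mul, id_eq, eq_mpr_eq_cast, le_eq_subset, Finsupp.coe_mk]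
    simp only [mem_univ, forall_true_left, not_and, not_forall, exists_prop,
      mem_filter, true_and] at ha
    refine ⟨⟨?_, fun i ↦ ?_⟩, fun i _ ↦ ⟨a.parts.count i, ha.1 i, rfl⟩⟩
    · conv_rhs => simp [← a.parts_sum]
      rw [sum_multiset_count_of_subset _ s]
      · simp only [smul_eq_mul]
      · intro i
        simp only [Multiset.mem_toFinset, not_not, mem_filter]
        apply ha.2
    · simp only [ne_eq, Multiset.mem_toFinset, not_not, mem_filter, and_imp]
      exact fun hi _ ↦ ha.2 i hi
  · intro p₁ hp₁ p₂ hp₂ h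
    apply Nat.Partition.ext
    simp only [true_and, mem_univ, mem_filter] at hp₁ hp₂
    ext i
    simp only [φ, ne_eq, Multiset.mem_toFinset, not_not, smul_eq_mul, Finsupp.mk.injEq] at h
    by_cases hi : i = 0
    · rw [hi]
      rw [Multiset.count_eq_zero_of_notMem]
      · rw [Multiset.count_eq_zero_of_notMem]
        intro a; exact Nat.lt_irrefl 0 (hs 0 (hp₂.2 0 a))
      intro a; exact Nat.lt_irrefl 0 (hs 0 (hp₁.2 0 a))
    · rw [← mul_left_inj' hi]
      rw [funext_iff] at h
      exact h.2 i
  · simp only [φ, mem_filter, mem_finsuppAntidiag, mem_univ, exists_prop, true_and, and_assoc]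
    rintro f ⟨hf, hf₃, hf₄⟩
    have hf' : f ∈ finsuppAntidiag s n := mem_finsuppAntidiag.mpr ⟨hf, hf₃⟩
    simp only [mem_finsuppAntidiag] at hf'
    refine ⟨⟨∑ i ∈ s, Multiset.replicate (f i / i) i, ?_, ?_⟩, ?_, ?_, ?_⟩
    · intro i hi
      simp only [exists_prop, Multiset.mem_sum, mem_map, Function.Embedding.coeFn_mk] at hi
      rcases hi with ⟨t, ht, z⟩
      apply hs
      rwa [Multiset.eq_of_mem_replicate z]
    · simp_rw [Multiset.sum_sum, Multiset.sum_replicate, Nat.nsmul_eq_mul]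
      rw [← hf'.1]
      refine sum_congr rfl fun i hi => Nat.div_mul_cancel ?_
      rcases hf₄ i hi with ⟨w, _, hw₂⟩
      rw [← hw₂]
      exact dvd_mul_left _ _
    · intro i
      simp_rw [Multiset.count_sum', Multiset.count_replicate, sum_ite_eq']
      split_ifs with h
      · rcases hf₄ i h with ⟨w, hw₁, hw₂⟩
        rwa [← hw₂, Nat.mul_div_cancel _ (hs i h)]
      · exact hc _ h
    · intro i hi
      rw [Multiset.mem_sum] at hi
      rcases hi with ⟨j, hj₁, hj₂⟩
      rwa [Multiset.eq_of_mem_replicate hj₂]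
    · ext i
      simp_rw [Multiset.count_sum', Multiset.count_replicate, sum_ite_eq']
      simp only [ne_eq, Multiset.mem_toFinset, not_not, smul_eq_mul, ite_mul,
        zero_mul, Finsupp.coe_mk]
      split_ifs with h
      · apply Nat.div_mul_cancel
        rcases hf₄ i h with ⟨w, _, hw₂⟩
        apply Dvd.intro_left _ hw₂
      · apply symm
        rw [← Finsupp.notMem_support_iff]
        exact notMem_mono hf'.2 h

theorem num_series'' [Field α] (i : ℕ) (hi : 0 < i) :
    (1 - (X : PowerSeries α) ^ i)⁻¹ = indicatorSeries α {k | i ∣ k} := by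
  obtain ⟨j, rfl⟩ : ∃ j, i = j + 1 := ⟨i - 1, (Nat.succ_pred_eq_of_pos hi).symm⟩
  exact num_series' j

lemma finite_part_le (n : ℕ) : {m : Multiset ℕ | (∀ x ∈ m, 0 < x) ∧ m.sum ≤ n}.Finite := by
  apply Set.Finite.subset ((Set.finite_Iic n).biUnion fun k _ => finite_part k)
  rintro m ⟨h1, h2⟩
  exact Set.mem_biUnion h2 ⟨h1, rfl⟩

lemma parts_injective {n : ℕ} : Function.Injective (Nat.Partition.parts (n := n)) := by
  intro p q h; cases p; cases q; simpa using h

theorem Bset_card (n : ℕ) (s : Finset ℕ) (hs : ∀ i ∈ s, 0 < i) :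
    ((Bset s n).ncard : ℚ) = coeff (R := ℚ) n (∏ i ∈ s, (1 - (X : PowerSeries ℚ) ^ i)⁻¹) := by
  have h1 : ∀ i ∈ s, (1 - (X : PowerSeries ℚ) ^ i)⁻¹
      = indicatorSeries ℚ ((· * i) '' (Set.univ : Set ℕ)) := by
    intro i hi
    have himg : ((· * i) '' (Set.univ : Set ℕ)) = {k | i ∣ k} := by
      ext k
      simp only [Set.image_univ, Set.mem_range, Set.mem_setOf_eq]
      constructor
      · rintro ⟨a, rfl⟩; exact Dvd.intro_left a rfl
      · rintro ⟨c, rfl⟩; exact ⟨c, mul_comm _ _⟩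
    rw [num_series'' i (hs i hi), himg]
  rw [Finset.prod_congr rfl h1,
    ← partialGF_prop ℚ n s hs (fun _ => Set.univ) (fun _ _ => trivial)]
  norm_cast
  have h2 : Bset s n = Nat.Partition.parts '' {p : n.Partition | ∀ j ∈ p.parts, j ∈ s} := by
    ext m
    constructor
    · rintro ⟨h1', h2'⟩
      exact ⟨⟨m, fun hx => hs _ (h1' _ hx), h2'⟩, h1', rfl⟩
    · rintro ⟨p, hp, rfl⟩
      exact ⟨hp, p.parts_sum⟩
  rw [h2, Set.ncard_image_of_injective _ parts_injective, ← Set.ncard_coe_finset]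
  congr 1
  ext p
  simp

def Eset (n : ℕ) : Set (Multiset ℕ) :=
  {ε | (∀ x ∈ ε, 0 < x) ∧ (∀ x ∈ ε, x ≠ 1) ∧ ε.sum = n}

lemma Eset_finite (n : ℕ) : (Eset n).Finite := by
  apply (finite_part n).subset
  rintro m ⟨h1, h2, h3⟩
  exact ⟨h1, h3⟩

lemma Eset_eq_Bset {v r : ℕ} (h : v ≤ r) : Eset v = Bset (Finset.Icc 2 r) v := by
  ext ε
  constructor
  · rintro ⟨h1, h2, h3⟩
    refine ⟨fun x hx => ?_, h3⟩
    have hp := h1 x hx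
    have hne := h2 x hx
    have hle : x ≤ ε.sum := Multiset.single_le_sum (fun y _ => Nat.zero_le y) x hx
    rw [Finset.mem_Icc]
    omega
  · rintro ⟨h1, h2⟩
    refine ⟨fun x hx => ?_, fun x hx => ?_, h2⟩ <;>
      · have := h1 x hx; rw [Finset.mem_Icc] at this; omega

lemma ncard_prod {α β : Type*} (s : Set α) (t : Set β) :
    (s ×ˢ t).ncard = s.ncard * t.ncard := by
  rw [← Nat.card_coe_set_eq, ← Nat.card_coe_set_eq, ← Nat.card_coe_set_eq,
    Nat.card_congr (Equiv.Set.prod s t), Nat.card_prod]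

lemma ncard_biUnion {α ι : Type*} (t : Finset ι) (f : ι → Set α)
    (hfin : ∀ i ∈ t, (f i).Finite)
    (hdisj : ∀ i ∈ t, ∀ j ∈ t, i ≠ j → Disjoint (f i) (f j)) :
    (⋃ i ∈ t, f i).ncard = ∑ i ∈ t, (f i).ncard := by
  classical
  induction t using Finset.induction_on with
  | empty => simp
  | @insert a s ha ih =>
    have hfinU : (⋃ x ∈ s, f x).Finite :=
      Set.Finite.biUnion s.finite_toSet (fun i hi => hfin i (mem_insert_of_mem hi))
    rw [Finset.sum_insert ha, Finset.set_biUnion_insert]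
    rw [Set.ncard_union_eq ?_ (hfin a (mem_insert_self a s)) hfinU]
    · rw [ih (fun i hi => hfin i (mem_insert_of_mem hi))
        (fun i hi j hj hij => hdisj i (mem_insert_of_mem hi) j (mem_insert_of_mem hj) hij)]
    · rw [Set.disjoint_left]
      intro x hx hx2
      rw [Set.mem_iUnion₂] at hx2
      obtain ⟨j, hj, hxj⟩ := hx2
      have := hdisj a (mem_insert_self a s) j (mem_insert_of_mem hj)
        (fun e => ha (e ▸ hj))
      exact (Set.disjoint_left.mp this) hx hxj

lemma MP_decomp (b r : ℕ) :
    (MPset b r).ncard = ∑ v ∈ Finset.range (r + 1), (Aset b (r - v)).ncard * (Eset v).ncard := by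
  have hset : MPset b r = ⋃ v ∈ Finset.range (r + 1), (Aset b (r - v)) ×ˢ (Eset v) := by
    ext ⟨γ, ε⟩
    constructor
    · rintro ⟨h1, h2, h3, h4, h5⟩
      dsimp only at h1 h2 h3 h4 h5
      rw [Set.mem_iUnion₂]
      refine ⟨ε.sum, by rw [Finset.mem_range]; omega, ?_⟩
      rw [Set.mem_prod]
      dsimp only
      exact ⟨⟨h1, h3, by omega⟩, ⟨h2, h4, rfl⟩⟩
    · intro hx
      rw [Set.mem_iUnion₂] at hx
      obtain ⟨v, hv, ⟨h1, h3, hsum1⟩, ⟨h2, h4, hsum2⟩⟩ := hx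
      rw [Finset.mem_range] at hv
      exact ⟨h1, h2, h3, h4, by omega⟩
  rw [hset, ncard_biUnion]
  · exact Finset.sum_congr rfl fun v _ => ncard_prod _ _
  · exact fun v _ => ((Aset_finite _ _).prod (Eset_finite _))
  · intro i hi j hj hij
    rw [Set.disjoint_left]
    rintro ⟨γ, ε⟩ ⟨-, h1⟩ ⟨-, h2⟩
    exact hij (h1.2.2.symm.trans h2.2.2)

lemma prod_inv (s : Finset ℕ) (f : ℕ → PowerSeries ℚ) :
    (∏ i ∈ s, f i)⁻¹ = ∏ i ∈ s, (f i)⁻¹ := by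
  classical
  induction s using Finset.induction_on with
  | empty => simp
  | @insert a s ha ih =>
    rw [Finset.prod_insert ha, Finset.prod_insert ha, PowerSeries.mul_inv_rev, ih, mul_comm]

lemma prod_Icc_split (k : ℕ) (hk : 1 ≤ k) :
    ∏ i ∈ Finset.Icc 1 k, (1 - (X : PowerSeries ℚ) ^ i)
      = (1 - (X : PowerSeries ℚ) ^ 1) * ∏ i ∈ Finset.Icc 2 k, (1 - (X : PowerSeries ℚ) ^ i) := by
  have hins : Finset.Icc 1 k = insert 1 (Finset.Icc 2 k) := by
    ext x
    simp only [Finset.mem_insert, Finset.mem_Icc]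
    omega
  rw [hins, Finset.prod_insert (by rw [Finset.mem_Icc]; omega)]

theorem MP_card_eq_coeff_genFun' (b r : ℕ) (hb : 1 ≤ b) :
    ((MPset b r).ncard : ℚ) =
      PowerSeries.coeff (R := ℚ) r
        ((PowerSeries.X : PowerSeries ℚ) ^ b
          * (∏ i ∈ Finset.Icc 2 b, (1 - (PowerSeries.X : PowerSeries ℚ) ^ i))⁻¹
          * (∏ i ∈ Finset.Icc 1 r, (1 - (PowerSeries.X : PowerSeries ℚ) ^ i))⁻¹) := by
  rw [mul_assoc, PowerSeries.coeff_X_pow_mul']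
  rcases lt_or_ge r b with hrb | hrb
  · rw [if_neg (by omega)]
    have : MPset b r = ∅ := by
      ext ⟨γ, ε⟩
      simp only [MPset, Set.mem_setOf_eq, Set.mem_empty_iff_false, iff_false, not_and]
      rintro h1 h2 h3 h4
      intro h5
      have := card_le_sum h1
      omega
    rw [this]
    simp
  · rw [if_pos hrb]
    have hr : 1 ≤ r := le_trans hb hrb
    set n := r - b with hn
    -- series manipulation
    have hswap : (∏ i ∈ Finset.Icc 2 b, (1 - (X : PowerSeries ℚ) ^ i))⁻¹
          * (∏ i ∈ Finset.Icc 1 r, (1 - (X : PowerSeries ℚ) ^ i))⁻¹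
        = (∏ i ∈ Finset.Icc 1 b, (1 - (X : PowerSeries ℚ) ^ i))⁻¹
          * (∏ i ∈ Finset.Icc 2 r, (1 - (X : PowerSeries ℚ) ^ i))⁻¹ := by
      rw [prod_Icc_split b hb, prod_Icc_split r hr, PowerSeries.mul_inv_rev,
        PowerSeries.mul_inv_rev]
      ring
    rw [hswap, PowerSeries.coeff_mul]
    have hc1 : ∀ u, coeff (R := ℚ) u (∏ i ∈ Finset.Icc 1 b, (1 - (X : PowerSeries ℚ) ^ i))⁻¹
        = ((Bset (Finset.Icc 1 b) u).ncard : ℚ) := by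
      intro u
      rw [prod_inv]
      exact (Bset_card u _ (Icc_pos b)).symm
    have hc2 : ∀ u, coeff (R := ℚ) u (∏ i ∈ Finset.Icc 2 r, (1 - (X : PowerSeries ℚ) ^ i))⁻¹
        = ((Bset (Finset.Icc 2 r) u).ncard : ℚ) := by
      intro u
      rw [prod_inv]
      refine (Bset_card u _ ?_).symm
      intro i hi; rw [Finset.mem_Icc] at hi; omega
    simp_rw [hc1, hc2]
    rw [Finset.Nat.sum_antidiagonal_eq_sum_range_succ_mk]
    -- now the combinatorial side
    rw [MP_decomp]
    have htrim : ∑ v ∈ Finset.range (r + 1), (Aset b (r - v)).ncard * (Eset v).ncard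
        = ∑ v ∈ Finset.range (n + 1), (Aset b (r - v)).ncard * (Eset v).ncard := by
      symm
      apply Finset.sum_subset
      · apply Finset.range_subset_range.mpr; omega
      · intro v hv hv2
        rw [Finset.mem_range] at hv hv2
        rw [Aset_empty (show r - v < b by omega), Set.ncard_empty, zero_mul]
    rw [htrim]
    have hterm : ∀ v ∈ Finset.range (n + 1),
        (Aset b (r - v)).ncard * (Eset v).ncard
          = (Bset (Finset.Icc 1 b) (n - v)).ncard * (Bset (Finset.Icc 2 r) v).ncard := by
      intro v hv
      rw [Finset.mem_range] at hv
      rw [Aset_card b (r - v) (by omega), Eset_eq_Bset (r := r) (by omega),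
        show r - v - b = n - v by omega]
    rw [Finset.sum_congr rfl hterm]
    have hrefl := Finset.sum_range_reflect
      (fun v => (Bset (Finset.Icc 1 b) (n - v)).ncard * (Bset (Finset.Icc 2 r) v).ncard) (n + 1)
    simp only [Nat.add_sub_cancel] at hrefl
    rw [← hrefl]
    push_cast
    apply Finset.sum_congr rfl
    intro k hk
    rw [Finset.mem_range] at hk
    have : n - (n - k) = k := by omega
    rw [this]

end
end MPaux

open PowerSeries in
/-- For `b ≥ 1`, the number of `b`-marked partitions of `r` is the
coefficient of `X^r` in
`X^b · (∏_{i=2}^{b} (1 − X^i))⁻¹ · (∏_{i=1}^{r} (1 − X^i))⁻¹ ∈ ℚ⟦X⟧`. -/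
theorem MP_card_eq_coeff_genFun (b r : ℕ) (hb : 1 ≤ b) :
    ((MPset b r).ncard : ℚ) =
      PowerSeries.coeff (R := ℚ) r
        ((PowerSeries.X : PowerSeries ℚ) ^ b
          * (∏ i ∈ Finset.Icc 2 b, (1 - (PowerSeries.X : PowerSeries ℚ) ^ i))⁻¹
          * (∏ i ∈ Finset.Icc 1 r, (1 - (PowerSeries.X : PowerSeries ℚ) ^ i))⁻¹) := by
  exact MPaux.MP_card_eq_coeff_genFun' b r hb
end

section
/- Let b, m, n, r ∈ ℕ with r ≥ 1, n ≥ r + b, n ≥ 2b, and with m ≥ r − b + 1 if b ≥ 1 and m ≥ r if b = 0. Then |T(m,n,b)_r| = |T(m,n,b)_{r−1}| + |MP_b(r)|; in particular this difference of tableau counts is independent of m and n in this range. -/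
open scoped BigOperators

/-! ### Auxiliary definitions and lemmas -/

/-- Pairs `(γ, λ)` of partitions with `γ` having exactly `b` parts and total size `r`,
with no bound on the parts. -/
def PPinf (b r : ℕ) : Set (Multiset ℕ × Multiset ℕ) :=
  {p | (∀ x ∈ p.1, 0 < x) ∧ (∀ x ∈ p.2, 0 < x) ∧
    Multiset.card p.1 = b ∧ p.1.sum + p.2.sum = r}

lemma mem_PPinf {b r : ℕ} {γ lam : Multiset ℕ} :
    (γ, lam) ∈ PPinf b r ↔ ((∀ x ∈ γ, 0 < x) ∧ (∀ x ∈ lam, 0 < x) ∧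
      Multiset.card γ = b ∧ γ.sum + lam.sum = r) := Iff.rfl

lemma mem_MPset {b r : ℕ} {γ lam : Multiset ℕ} :
    (γ, lam) ∈ MPset b r ↔ ((∀ x ∈ γ, 0 < x) ∧ (∀ x ∈ lam, 0 < x) ∧
      Multiset.card γ = b ∧ (∀ x ∈ lam, x ≠ 1) ∧ γ.sum + lam.sum = r) := Iff.rfl

lemma mem_TwoRowSSYT {m n k r : ℕ} {t1 : Fin (n - k) → ℕ} {t2 : Fin k → ℕ} :
    (t1, t2) ∈ TwoRowSSYT m n k r ↔ (Monotone t1 ∧ Monotone t2 ∧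
      (∀ (j : ℕ) (hk : j < k) (hnk : j < n - k), t1 ⟨j, hnk⟩ < t2 ⟨j, hk⟩) ∧
      (∀ i, t1 i ≤ m) ∧ (∀ j, t2 j ≤ m) ∧
      ((∑ i, t1 i) + (∑ j, t2 j) = r)) := Iff.rfl

lemma finite_posMsets (N : ℕ) :
    {s : Multiset ℕ | (∀ x ∈ s, 0 < x) ∧ s.sum ≤ N}.Finite := by
  classical
  apply Set.Finite.subset ((N • Multiset.range (N + 1)).powerset.toFinset :
    Finset (Multiset ℕ)).finite_toSet
  rintro s ⟨hpos, hsum⟩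
  simp only [Finset.mem_coe, Multiset.mem_toFinset, Multiset.mem_powerset]
  rw [Multiset.le_iff_count]
  intro a
  by_cases ha : a ∈ s
  · have hpos1 : ∀ x ∈ s, 1 ≤ x := fun x hx => hpos x hx
    have hcard : Multiset.card s ≤ s.sum := by
      simpa using Multiset.card_nsmul_le_sum hpos1
    have h1 : Multiset.count a s ≤ Multiset.card s := Multiset.count_le_card a s
    have ha' : a ≤ s.sum := Multiset.single_le_sum (fun x _ => Nat.zero_le x) a ha
    have hmem : a ∈ Multiset.range (N + 1) := Multiset.mem_range.mpr (by omega)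
    rw [Multiset.count_nsmul,
      Multiset.count_eq_one_of_mem (Multiset.nodup_range (N + 1)) hmem]
    omega
  · simp [Multiset.count_eq_zero_of_notMem ha]

lemma ppinf_finite (b r : ℕ) : (PPinf b r).Finite := by
  apply Set.Finite.subset (Set.Finite.prod (finite_posMsets r) (finite_posMsets r))
  rintro ⟨γ, lam⟩ hmem
  rw [mem_PPinf] at hmem
  obtain ⟨h1, h2, h3, h4⟩ := hmem
  exact ⟨⟨h1, show γ.sum ≤ r by omega⟩, ⟨h2, show lam.sum ≤ r by omega⟩⟩

lemma ppinf_rec (b r : ℕ) (hr : 1 ≤ r) :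
    (PPinf b r).ncard = (PPinf b (r - 1)).ncard + (MPset b r).ncard := by
  classical
  have hsplit : PPinf b r = (PPinf b r ∩ {p | (1:ℕ) ∈ p.2}) ∪
      (PPinf b r ∩ {p | (1:ℕ) ∉ p.2}) := by
    ext p
    by_cases h : (1:ℕ) ∈ p.2 <;> simp [h]
  have hdisj : Disjoint (PPinf b r ∩ {p | (1:ℕ) ∈ p.2})
      (PPinf b r ∩ {p | (1:ℕ) ∉ p.2}) := by
    apply Set.disjoint_left.mpr
    rintro p ⟨-, h1⟩ ⟨-, h2⟩
    exact h2 h1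
  have hB : PPinf b r ∩ {p | (1:ℕ) ∉ p.2} = MPset b r := by
    ext ⟨γ, lam⟩
    rw [Set.mem_inter_iff, mem_PPinf, mem_MPset]
    constructor
    · rintro ⟨⟨h1, h2, h3, h4⟩, h5⟩
      exact ⟨h1, h2, h3, fun x hx hx1 => h5 (hx1 ▸ hx), h4⟩
    · rintro ⟨h1, h2, h3, h4, h5⟩
      exact ⟨⟨h1, h2, h3, h5⟩, fun h => h4 1 h rfl⟩
  have hA : ((fun p : Multiset ℕ × Multiset ℕ => (p.1, (1:ℕ) ::ₘ p.2)) '' PPinf b (r - 1))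
      = PPinf b r ∩ {p | (1:ℕ) ∈ p.2} := by
    ext ⟨γ, lam⟩
    constructor
    · rintro ⟨⟨γ', lam'⟩, hmem, heq⟩
      rw [mem_PPinf] at hmem
      obtain ⟨h1, h2, h3, h4⟩ := hmem
      simp only [Prod.mk.injEq] at heq
      obtain ⟨rfl, rfl⟩ := heq
      refine ⟨?_, Multiset.mem_cons_self 1 lam'⟩
      rw [mem_PPinf]
      refine ⟨h1, ?_, h3, ?_⟩
      · intro x hx
        rcases Multiset.mem_cons.mp hx with h | h
        · omega
        · exact h2 x h
      · rw [Multiset.sum_cons]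
        omega
    · rintro ⟨hmem, h5⟩
      rw [mem_PPinf] at hmem
      obtain ⟨h1, h2, h3, h4⟩ := hmem
      have h5 : (1:ℕ) ∈ lam := h5
      refine ⟨(γ, lam.erase 1), ?_, ?_⟩
      · rw [mem_PPinf]
        refine ⟨h1, fun x hx => h2 x (Multiset.mem_of_mem_erase hx), h3, ?_⟩
        have hs : lam.sum = 1 + (lam.erase 1).sum := by
          rw [← Multiset.sum_cons, Multiset.cons_erase h5]
        omega
      · dsimp only
        rw [Multiset.cons_erase h5]
  have hAinj : Set.InjOn (fun p : Multiset ℕ × Multiset ℕ => (p.1, (1:ℕ) ::ₘ p.2))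
      (PPinf b (r - 1)) := by
    rintro ⟨a, x⟩ - ⟨c, y⟩ - h
    simp only [Prod.mk.injEq] at h
    exact Prod.ext h.1 ((Multiset.cons_inj_right 1).mp h.2)
  rw [hsplit, Set.ncard_union_eq hdisj ((ppinf_finite b r).inter_of_left _)
    ((ppinf_finite b r).inter_of_left _), hB, ← hA, Set.ncard_image_of_injOn hAinj]

/-- The forward map recording the second row and the positive entries of the first row. -/
def Phi (n b : ℕ) (t : (Fin (n - b) → ℕ) × (Fin b → ℕ)) : Multiset ℕ × Multiset ℕ :=
  ((List.ofFn t.2 : Multiset ℕ),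
    Multiset.filter (fun x => 0 < x) (List.ofFn t.1 : Multiset ℕ))

lemma mset_decomp (M : Multiset ℕ) :
    M = Multiset.filter (fun x => 0 < x) M +
      Multiset.replicate
        (Multiset.card M - Multiset.card (Multiset.filter (fun x => 0 < x) M)) 0 := by
  have h0 := Multiset.filter_add_not (fun x => 0 < x) M
  have h1 : Multiset.filter (fun x => ¬ 0 < x) M =
      Multiset.replicate (Multiset.card (Multiset.filter (fun x => ¬ 0 < x) M)) 0 :=
    Multiset.eq_replicate_card.mpr (fun x hx => by
      have := (Multiset.mem_filter.mp hx).2; omega)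
  have h2 : Multiset.card (Multiset.filter (fun x => 0 < x) M) +
      Multiset.card (Multiset.filter (fun x => ¬ 0 < x) M) = Multiset.card M := by
    rw [← Multiset.card_add, h0]
  have h3 : Multiset.card (Multiset.filter (fun x => ¬ 0 < x) M) =
      Multiset.card M - Multiset.card (Multiset.filter (fun x => 0 < x) M) := by omega
  nth_rewrite 1 [← h0]
  rw [h1, h3]

lemma monotone_ofFn_inj {k : ℕ} {f g : Fin k → ℕ} (hf : Monotone f) (hg : Monotone g)
    (h : (↑(List.ofFn f) : Multiset ℕ) = ↑(List.ofFn g)) : f = g :=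
  List.ofFn_injective (List.Perm.eq_of_sortedLE
    (List.sortedLE_ofFn_iff.mpr hf) (List.sortedLE_ofFn_iff.mpr hg) (Multiset.coe_eq_coe.mp h))

lemma ofFn_get_cast {α : Type*} (l : List α) {k : ℕ} (h : l.length = k) :
    List.ofFn (fun i : Fin k => l.get (Fin.cast h.symm i)) = l := by
  subst h
  simp [List.ofFn_get]

lemma sum_ofFn_get_cast (l : List ℕ) {k : ℕ} (h : l.length = k) :
    ∑ i : Fin k, l.get (Fin.cast h.symm i) = l.sum := by
  rw [← List.sum_ofFn, ofFn_get_cast l h]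

lemma monotone_get_cast {l : List ℕ} (hl : List.Pairwise (· ≤ ·) l) {k : ℕ}
    (h : l.length = k) : Monotone (fun i : Fin k => l.get (Fin.cast h.symm i)) := by
  intro i j hij
  apply hl.sortedLE.monotone_get
  rw [Fin.le_def] at hij ⊢
  exact hij

lemma get_cast_mem {α : Type*} (l : List α) {k : ℕ} (h : l.length = k) (i : Fin k) :
    l.get (Fin.cast h.symm i) ∈ l :=
  List.get_mem l (Fin.cast h.symm i)

lemma get_cast_replicate_append {α : Type*} (a : α) (c : ℕ) (l' : List α) {k : ℕ}
    (h : (List.replicate c a ++ l').length = k) (j : ℕ) (hj : j < k) (hjc : j < c) :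
    (List.replicate c a ++ l').get (Fin.cast h.symm ⟨j, hj⟩) = a := by
  rw [List.get_eq_getElem,
    List.getElem_append_left (by simp only [List.length_replicate, Fin.coe_cast]; exact hjc)]
  exact List.getElem_replicate _

lemma ssyt_ncard_eq (b m n s : ℕ) (h2 : s + b ≤ n) (h3 : 2 * b ≤ n)
    (hm0 : b = 0 → s ≤ m) (hm1 : 1 ≤ b → s + 1 ≤ m + b) :
    (TwoRowSSYT m n b s).ncard = (PPinf b s).ncard := by
  classical
  have himg : Phi n b '' TwoRowSSYT m n b s = PPinf b s := by
    apply Set.Subset.antisymm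
    · rintro _ ⟨⟨t1, t2⟩, ht, rfl⟩
      rw [mem_TwoRowSSYT] at ht
      obtain ⟨hmon1, hmon2, hcol, hb1, hb2, hsum⟩ := ht
      simp only [Phi]
      rw [mem_PPinf]
      refine ⟨?_, ?_, ?_, ?_⟩
      · intro x hx
        rw [Multiset.mem_coe, List.mem_ofFn] at hx
        obtain ⟨j, rfl⟩ := hx
        have hj2 : (j : ℕ) < n - b := lt_of_lt_of_le j.2 (by omega)
        have hc : t1 ⟨↑j, hj2⟩ < t2 j := by simpa using hcol j j.2 hj2
        omega
      · intro x hx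
        exact (Multiset.mem_filter.mp hx).2
      · simp [Multiset.coe_card, List.length_ofFn]
      · have hlam : (Multiset.filter (fun x => 0 < x) (↑(List.ofFn t1) : Multiset ℕ)).sum
            = (↑(List.ofFn t1) : Multiset ℕ).sum := by
          nth_rewrite 2 [← Multiset.filter_add_not (fun x => 0 < x)
            (↑(List.ofFn t1) : Multiset ℕ)]
          rw [Multiset.sum_add]
          have hz : (Multiset.filter (fun x => ¬ 0 < x)
              (↑(List.ofFn t1) : Multiset ℕ)).sum = 0 :=
            Multiset.sum_eq_zero (fun x hx => by
              have := (Multiset.mem_filter.mp hx).2; omega)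
          omega
        rw [hlam, Multiset.sum_coe, Multiset.sum_coe, List.sum_ofFn, List.sum_ofFn]
        omega
    · rintro ⟨γ, lam⟩ hmem
      rw [mem_PPinf] at hmem
      obtain ⟨hγpos, hlpos, hγcard, hsum⟩ := hmem
      have hγ1 : ∀ x ∈ γ, 1 ≤ x := fun x hx => hγpos x hx
      have hlam1 : ∀ x ∈ lam, 1 ≤ x := fun x hx => hlpos x hx
      have hγsum_ge : b ≤ γ.sum := by
        simpa [hγcard] using Multiset.card_nsmul_le_sum hγ1
      have hlcard : Multiset.card lam ≤ lam.sum := by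
        simpa using Multiset.card_nsmul_le_sum hlam1
      have hlsum : lam.sum + b ≤ s := by omega
      have hl2len : (Multiset.sort γ (· ≤ ·)).length = b := by
        rw [Multiset.length_sort, hγcard]
      have hl1len : (List.replicate ((n - b) - Multiset.card lam) 0 ++
          Multiset.sort lam (· ≤ ·)).length = n - b := by
        rw [List.length_append, List.length_replicate, Multiset.length_sort]
        omega
      have hsort1 : List.Pairwise (· ≤ ·) (List.replicate ((n - b) - Multiset.card lam) 0 ++
          Multiset.sort lam (· ≤ ·)) := by
        refine List.pairwise_append.mpr ⟨?_, Multiset.pairwise_sort .., ?_⟩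
        · exact List.pairwise_replicate.mpr (Or.inr le_rfl)
        · intro a ha x hx
          have := List.eq_of_mem_replicate ha
          omega
      refine ⟨(fun i => (List.replicate ((n - b) - Multiset.card lam) 0 ++
            Multiset.sort lam (· ≤ ·)).get (Fin.cast hl1len.symm i),
          fun j => (Multiset.sort γ (· ≤ ·)).get (Fin.cast hl2len.symm j)), ?_, ?_⟩
      · rw [mem_TwoRowSSYT]
        refine ⟨?_, ?_, ?_, ?_, ?_, ?_⟩
        · exact monotone_get_cast hsort1 hl1len
        · exact monotone_get_cast (Multiset.pairwise_sort ..) hl2len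
        · intro j hjb hjnb
          rw [get_cast_replicate_append 0 _ _ hl1len j hjnb (by omega)]
          exact hγpos _ ((Multiset.mem_sort _).mp (get_cast_mem _ hl2len ⟨j, hjb⟩))
        · intro i
          have hmem := get_cast_mem _ hl1len i
          rcases List.mem_append.mp hmem with hmem | hmem
          · rw [List.eq_of_mem_replicate hmem]
            exact Nat.zero_le m
          · have hxl : _ ∈ lam := (Multiset.mem_sort _).mp hmem
            have hxs := Multiset.single_le_sum (fun y _ => Nat.zero_le y) _ hxl
            rcases Nat.eq_zero_or_pos b with hb | hb
            · have := hm0 hb; omega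
            · have := hm1 hb; omega
        · intro j
          have hxγ : (Multiset.sort γ (· ≤ ·)).get (Fin.cast hl2len.symm j) ∈ γ :=
            (Multiset.mem_sort _).mp (get_cast_mem _ hl2len j)
          set x := (Multiset.sort γ (· ≤ ·)).get (Fin.cast hl2len.symm j) with hxdef
          have h4 : x + (γ.erase x).sum = γ.sum := by
            conv_rhs => rw [← Multiset.cons_erase hxγ]
            rw [Multiset.sum_cons]
          have hb1 : 0 < b := hγcard ▸ Multiset.card_pos_iff_exists_mem.mpr ⟨x, hxγ⟩
          have h6 : Multiset.card (γ.erase x) ≤ (γ.erase x).sum := by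
            have herased : ∀ y ∈ γ.erase x, 1 ≤ y :=
              fun y hy => hγpos y (Multiset.mem_of_mem_erase hy)
            simpa using Multiset.card_nsmul_le_sum herased
          have h7 : Multiset.card (γ.erase x) = b - 1 := by
            rw [Multiset.card_erase_of_mem hxγ, hγcard]
            rfl
          have := hm1 hb1
          omega
        · rw [sum_ofFn_get_cast _ hl1len, sum_ofFn_get_cast _ hl2len]
          have hs1 : (List.replicate ((n - b) - Multiset.card lam) 0 ++
              Multiset.sort lam (· ≤ ·)).sum = lam.sum := by
            rw [List.sum_append, List.sum_replicate, smul_zero, zero_add,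
              ← Multiset.sum_coe, Multiset.sort_eq]
          have hs2 : (Multiset.sort γ (· ≤ ·)).sum = γ.sum := by
            rw [← Multiset.sum_coe, Multiset.sort_eq]
          rw [hs1, hs2]
          omega
      · simp only [Phi]
        rw [Prod.mk.injEq]
        constructor
        · rw [ofFn_get_cast _ hl2len, Multiset.sort_eq]
        · rw [ofFn_get_cast _ hl1len,
            ← Multiset.coe_add, Multiset.coe_replicate, Multiset.sort_eq,
            Multiset.filter_add]
          have hrep : Multiset.filter (fun x => 0 < x)
              (Multiset.replicate ((n - b) - Multiset.card lam) 0) = 0 := by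
            rw [Multiset.filter_eq_nil]
            intro a ha
            have := Multiset.eq_of_mem_replicate ha
            omega
          rw [hrep, Multiset.filter_eq_self.mpr hlpos, zero_add]
  have hinj : Set.InjOn (Phi n b) (TwoRowSSYT m n b s) := by
    rintro ⟨t1, t2⟩ ht ⟨u1, u2⟩ hu heq
    rw [mem_TwoRowSSYT] at ht hu
    obtain ⟨hm1t, hm2t, -, -, -, -⟩ := ht
    obtain ⟨hm1u, hm2u, -, -, -, -⟩ := hu
    simp only [Phi, Prod.mk.injEq] at heq
    obtain ⟨h2eq, h1eq⟩ := heq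
    have e2 : t2 = u2 := monotone_ofFn_inj hm2t hm2u h2eq
    have key : ∀ (f : Fin (n - b) → ℕ),
        (↑(List.ofFn f) : Multiset ℕ) =
          Multiset.filter (fun x => 0 < x) (↑(List.ofFn f) : Multiset ℕ) +
          Multiset.replicate ((n - b) -
            Multiset.card (Multiset.filter (fun x => 0 < x)
              (↑(List.ofFn f) : Multiset ℕ))) 0 := by
      intro f
      have := mset_decomp (↑(List.ofFn f) : Multiset ℕ)
      simpa using this
    have e1 : t1 = u1 := by
      apply monotone_ofFn_inj hm1t hm1u
      rw [key t1, key u1, h1eq]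
    rw [e1, e2]
  rw [← himg, Set.ncard_image_of_injOn hinj]

/-- For `r ≥ 1`, `n ≥ r + b`, `n ≥ 2b`, and `m ≥ r − b + 1` if
`b ≥ 1` (in the integers: `m + b ≥ r + 1`), respectively `m ≥ r` if `b = 0`, one has
`|T(m,n,b)_r| = |T(m,n,b)_{r−1}| + |MP_b(r)|`; in particular this difference of tableau
counts is independent of `m` and `n` in this range. -/
theorem twoRowSSYT_card_eq_card_add_MP_card (b m n r : ℕ)
    (hr : 1 ≤ r) (h2 : r + b ≤ n) (h3 : 2 * b ≤ n)
    (hm0 : b = 0 → r ≤ m) (hm1 : 1 ≤ b → r + 1 ≤ m + b) :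
    (TwoRowSSYT m n b r).ncard
      = (TwoRowSSYT m n b (r - 1)).ncard + (MPset b r).ncard := by
  rw [ssyt_ncard_eq b m n r h2 h3 hm0 hm1,
    ssyt_ncard_eq b m n (r - 1) (by omega) h3
      (fun hb => by have := hm0 hb; omega)
      (fun hb => by have := hm1 hb; omega),
    ppinf_rec b r hr]
end
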